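/- arXiv:1802.05759 — 11 statements merged into one kernel-verified Lean document; each statement's English description precedes it below -/
import Mathlib

section
/- Let A ∈ ℂ^{m×m}, B ∈ ℂ^{n×n}, c ∈ ℂ^m, d ∈ ℂ^n. Let U ∈ ℂ^{m×k} have orthonormal columns spanning span{c, Ac, ..., A^{k-1}c} (assumed of dimension k), and let V ∈ ℂ^{n×ℓ} have orthonormal columns spanning span{d, Bd, ..., B^{ℓ-1}d} (assumed of dimension ℓ). Set G = U* A U, H = V* B V, c̃ = U* c, d̃ = V* d. Then for every family of complex coefficients (p_{ij}) with 0 ≤ i ≤ k−1, 0 ≤ j ≤ ℓ−1 one has Σ_{i=0}^{k−1} Σ_{j=0}^{ℓ−1} p_{ij} (A^i c)(B^j d)^T = U ( Σ_{i=0}^{k−1} Σ_{j=0}^{ℓ−1} p_{ij} (G^i c̃)(H^j d̃)^T ) V^T. -/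
open Matrix

lemma proj_fix {m k : ℕ} (U : Matrix (Fin m) (Fin k) ℂ) (hU : Uᴴ * U = 1)
    (x : Fin m → ℂ)
    (hx : x ∈ Submodule.span ℂ (Set.range fun j : Fin k => fun a => U a j)) :
    U *ᵥ (Uᴴ *ᵥ x) = x := by
  have h : (Set.range fun j : Fin k => fun a => U a j) = Set.range U.col := rfl
  rw [h, ← Matrix.range_mulVecLin] at hx
  obtain ⟨y, rfl⟩ := hx
  simp only [Matrix.mulVecLin_apply, Matrix.mulVec_mulVec]
  rw [hU, Matrix.mul_one]

lemma krylov_eq {m k : ℕ} (A : Matrix (Fin m) (Fin m) ℂ) (c : Fin m → ℂ)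
    (U : Matrix (Fin m) (Fin k) ℂ) (hU : Uᴴ * U = 1)
    (hspanU : Submodule.span ℂ {v : Fin m → ℂ | ∃ i < k, v = (A ^ i) *ᵥ c} =
      Submodule.span ℂ (Set.range fun j : Fin k => fun a => U a j))
    (i : ℕ) (hi : i < k) :
    U *ᵥ ((Uᴴ * A * U) ^ i *ᵥ (Uᴴ *ᵥ c)) = (A ^ i) *ᵥ c := by
  have hfix : ∀ i' < k, U *ᵥ (Uᴴ *ᵥ ((A ^ i') *ᵥ c)) = (A ^ i') *ᵥ c := by
    intro i' hi'
    refine proj_fix U hU _ ?_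
    rw [← hspanU]
    exact Submodule.subset_span ⟨i', hi', rfl⟩
  have key : ∀ i' ≤ i, (Uᴴ * A * U) ^ i' *ᵥ (Uᴴ *ᵥ c) = Uᴴ *ᵥ ((A ^ i') *ᵥ c) := by
    intro i' hi'
    induction i' with
    | zero => simp
    | succ j ih =>
      have hj : j ≤ i := Nat.le_of_succ_le hi'
      have hjk : j < k := lt_of_le_of_lt hj hi
      rw [pow_succ', ← Matrix.mulVec_mulVec, ih hj, ← Matrix.mulVec_mulVec _ (Uᴴ * A) U,
        hfix j hjk, Matrix.mulVec_mulVec, Matrix.mulVec_mulVec, Matrix.mul_assoc, ← pow_succ']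
  rw [key i le_rfl]
  exact hfix i hi

lemma conj_vecMulVec {m n k l : ℕ} (U : Matrix (Fin m) (Fin k) ℂ)
    (V : Matrix (Fin n) (Fin l) ℂ) (x : Fin k → ℂ) (y : Fin l → ℂ) :
    U * vecMulVec x y * Vᵀ = vecMulVec (U *ᵥ x) (V *ᵥ y) := by
  rw [vecMulVec_eq (Fin 1), vecMulVec_eq (Fin 1), replicateCol_mulVec, ← vecMul_transpose V y,
    replicateRow_vecMul]
  simp only [Matrix.mul_assoc]

/-- Exactness of the tensorized Krylov (Arnoldi) approximation for bivariate polynomials of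
bidegree at most `(k-1, ℓ-1)`: with `G = Uᴴ A U`, `H = Vᴴ B V`, `c̃ = Uᴴ c`, `d̃ = Vᴴ d`,
one has `Σᵢⱼ pᵢⱼ (Aⁱc)(Bʲd)ᵀ = U (Σᵢⱼ pᵢⱼ (Gⁱc̃)(Hʲd̃)ᵀ) Vᵀ`. -/
theorem bivariate_arnoldi_exactness {m n k l : ℕ}
    (A : Matrix (Fin m) (Fin m) ℂ) (B : Matrix (Fin n) (Fin n) ℂ)
    (c : Fin m → ℂ) (d : Fin n → ℂ)
    (U : Matrix (Fin m) (Fin k) ℂ) (V : Matrix (Fin n) (Fin l) ℂ)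
    (hU : Uᴴ * U = 1) (hV : Vᴴ * V = 1)
    (hspanU : Submodule.span ℂ {v : Fin m → ℂ | ∃ i < k, v = (A ^ i) *ᵥ c} =
      Submodule.span ℂ (Set.range fun j : Fin k => fun a => U a j))
    (hdimU : Module.finrank ℂ
      (Submodule.span ℂ {v : Fin m → ℂ | ∃ i < k, v = (A ^ i) *ᵥ c}) = k)
    (hspanV : Submodule.span ℂ {v : Fin n → ℂ | ∃ j < l, v = (B ^ j) *ᵥ d} =
      Submodule.span ℂ (Set.range fun j : Fin l => fun b => V b j))
    (hdimV : Module.finrank ℂ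
      (Submodule.span ℂ {v : Fin n → ℂ | ∃ j < l, v = (B ^ j) *ᵥ d}) = l)
    (p : Fin k → Fin l → ℂ) :
    ∑ i : Fin k, ∑ j : Fin l,
        p i j • vecMulVec ((A ^ (i : ℕ)) *ᵥ c) ((B ^ (j : ℕ)) *ᵥ d) =
    U * (∑ i : Fin k, ∑ j : Fin l,
        p i j • vecMulVec (((Uᴴ * A * U) ^ (i : ℕ)) *ᵥ (Uᴴ *ᵥ c))
          (((Vᴴ * B * V) ^ (j : ℕ)) *ᵥ (Vᴴ *ᵥ d))) * Vᵀ := by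
  symm
  rw [Matrix.mul_sum, Matrix.sum_mul]
  refine Finset.sum_congr rfl fun i _ => ?_
  rw [Matrix.mul_sum, Matrix.sum_mul]
  refine Finset.sum_congr rfl fun j _ => ?_
  rw [Matrix.mul_smul, Matrix.smul_mul, conj_vecMulVec,
    krylov_eq A c U hU hspanU i i.isLt, krylov_eq B d V hV hspanV j j.isLt]
end

section
/- Let A ∈ ℂ^{m×m}, B ∈ ℂ^{n×n}, C ∈ ℂ^{m×n}, and suppose B is diagonalizable: there exists an invertible Q ∈ ℂ^{n×n} with Q^{-1} B Q = diag(μ_1, ..., μ_n). Let p(x,y) = Σ_{i=0}^{k} Σ_{j=0}^{ℓ} p_{ij} x^i y^j be a bivariate polynomial and set C̃ = C Q^{-T} with columns c̃_1, ..., c̃_n. Then p{A,B}(C) = [ p_{μ_1}(A) c̃_1, p_{μ_2}(A) c̃_2, ..., p_{μ_n}(A) c̃_n ] Q^T, where p_μ(A) := Σ_{i=0}^{k} (Σ_{j=0}^{ℓ} p_{ij} μ^j) A^i, i.e., the j-th column of p{A,B}(C) Q^{-T} equals p_{μ_j}(A) c̃_j. -/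
open Matrix

/-- Diagonalization of the second argument of a bivariate (polynomial) matrix function:
if `Q⁻¹ B Q = diag(μ)`, then the `b`-th column of `p{A,B}(C) Q⁻ᵀ` equals `p_{μ_b}(A) c̃_b`,
where `c̃_b` is the `b`-th column of `C̃ = C Q⁻ᵀ` and `p_μ(A) = Σᵢ (Σⱼ pᵢⱼ μʲ) Aⁱ`. -/
theorem bivariate_diag_second_arg {m n k l : ℕ}
    (A : Matrix (Fin m) (Fin m) ℂ) (B Q : Matrix (Fin n) (Fin n) ℂ)
    (C : Matrix (Fin m) (Fin n) ℂ) (μ : Fin n → ℂ)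
    (hQ : IsUnit Q.det)
    (hB : Q⁻¹ * B * Q = Matrix.diagonal μ)
    (p : Fin (k + 1) → Fin (l + 1) → ℂ) :
    ∀ b : Fin n,
      (fun a => ((∑ i : Fin (k + 1), ∑ j : Fin (l + 1),
          p i j • (A ^ (i : ℕ) * C * Bᵀ ^ (j : ℕ))) * (Q⁻¹)ᵀ) a b) =
      (∑ i : Fin (k + 1), (∑ j : Fin (l + 1), p i j * μ b ^ (j : ℕ)) • A ^ (i : ℕ)) *ᵥ
        (fun a => (C * (Q⁻¹)ᵀ) a b) := by
  -- first, Q⁻¹ * B = diagonal μ * Q⁻¹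
  have h1 : Q⁻¹ * B = Matrix.diagonal μ * Q⁻¹ := by
    have := congrArg (fun M => M * Q⁻¹) hB
    simpa [mul_assoc, Matrix.mul_nonsing_inv Q hQ] using this
  have h2 : ∀ j : ℕ, Q⁻¹ * B ^ j = Matrix.diagonal (fun x => μ x ^ j) * Q⁻¹ := by
    intro j
    induction j with
    | zero => simp
    | succ j ih =>
      rw [pow_succ', ← mul_assoc, h1, mul_assoc, ih, ← mul_assoc,
        Matrix.diagonal_mul_diagonal]
      simp [pow_succ']
  have key : ∀ j : ℕ, Bᵀ ^ j * (Q⁻¹)ᵀ = (Q⁻¹)ᵀ * Matrix.diagonal (fun x => μ x ^ j) := by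
    intro j
    calc Bᵀ ^ j * (Q⁻¹)ᵀ = (B ^ j)ᵀ * (Q⁻¹)ᵀ := by rw [Matrix.transpose_pow]
      _ = (Q⁻¹ * B ^ j)ᵀ := by rw [Matrix.transpose_mul]
      _ = (Matrix.diagonal (fun x => μ x ^ j) * Q⁻¹)ᵀ := by rw [h2]
      _ = (Q⁻¹)ᵀ * Matrix.diagonal (fun x => μ x ^ j) := by
          rw [Matrix.transpose_mul, Matrix.diagonal_transpose]
  intro b
  funext a
  have hterm : ∀ (i : Fin (k+1)) (j : Fin (l+1)),
      (A ^ (i : ℕ) * C * Bᵀ ^ (j : ℕ) * (Q⁻¹)ᵀ) a b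
        = (A ^ (i : ℕ) * (C * (Q⁻¹)ᵀ)) a b * μ b ^ (j : ℕ) := by
    intro i j
    rw [Matrix.mul_assoc (A ^ (i : ℕ) * C), key, ← Matrix.mul_assoc,
      Matrix.mul_assoc (A ^ (i:ℕ)), Matrix.mul_diagonal]
  simp only [Finset.sum_mul, Matrix.smul_mul, Matrix.sum_apply, Matrix.smul_apply,
    Matrix.mulVec, Matrix.sum_apply, Matrix.smul_apply, dotProduct, Finset.sum_apply,
    Pi.smul_apply, smul_eq_mul, hterm]
  simp only [Matrix.sum_mul, Matrix.smul_mul, Matrix.sum_apply, Matrix.smul_apply,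
    smul_eq_mul, hterm]
  have hR : ∀ f : Fin (k+1) → Fin (l+1) → Fin m → ℂ,
      ∑ x : Fin m, ∑ i : Fin (k+1), ∑ j : Fin (l+1), f i j x
        = ∑ i : Fin (k+1), ∑ j : Fin (l+1), ∑ x : Fin m, f i j x := by
    intro f
    rw [Finset.sum_comm]
    exact Finset.sum_congr rfl fun i _ => by rw [Finset.sum_comm]
  rw [hR fun i j x => p i j * μ b ^ (j : ℕ) * (A ^ (i : ℕ)) a x * (C * (Q⁻¹)ᵀ) x b]
  refine Finset.sum_congr rfl fun i _ => Finset.sum_congr rfl fun j _ => ?_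
  simp only [Matrix.mul_apply, Finset.mul_sum, Finset.sum_mul]
  exact Finset.sum_congr rfl fun x _ => Finset.sum_congr rfl fun y _ => by ring
end

section
/- Let A ∈ ℂ^{m×m} and B ∈ ℂ^{n×n} both be diagonalizable: P^{-1} A P = diag(λ_1, ..., λ_m) and Q^{-1} B Q = diag(μ_1, ..., μ_n) for invertible P, Q. Then for every bivariate polynomial p(x,y) = Σ_{i=0}^{k} Σ_{j=0}^{ℓ} p_{ij} x^i y^j and every C ∈ ℂ^{m×n}, p{A,B}(C) = P ( F ∘ C̃ ) Q^T, where C̃ = P^{-1} C Q^{-T}, F ∈ ℂ^{m×n} is the matrix with entries F_{ab} = p(λ_a, μ_b), and ∘ denotes the entrywise (Hadamard) product. -/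
open Matrix

lemma conj_pow_aux {N : Type*} [Fintype N] [DecidableEq N]
    (P Pi D : Matrix N N ℂ) (h1 : P * Pi = 1) (h2 : Pi * P = 1) (i : ℕ) :
    (P * D * Pi) ^ i = P * D ^ i * Pi := by
  induction i with
  | zero => simp [h1]
  | succ i ih =>
    rw [pow_succ, ih, pow_succ]
    calc P * D ^ i * Pi * (P * D * Pi)
        = P * D ^ i * (Pi * P) * D * Pi := by
          simp only [Matrix.mul_assoc]
      _ = P * (D ^ i * D) * Pi := by rw [h2]; simp only [Matrix.mul_one, Matrix.mul_assoc]

/-- Two-sided diagonalization formula for bivariate (polynomial) matrix functions: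
if `P⁻¹ A P = diag(λ)` and `Q⁻¹ B Q = diag(μ)` then
`p{A,B}(C) = P (F ∘ C̃) Qᵀ` with `C̃ = P⁻¹ C Q⁻ᵀ`, `F_{ab} = p(λ_a, μ_b)`, and `∘`
the entrywise (Hadamard) product. -/
theorem bivariate_diag_both_args {m n k l : ℕ}
    (A P : Matrix (Fin m) (Fin m) ℂ) (B Q : Matrix (Fin n) (Fin n) ℂ)
    (C : Matrix (Fin m) (Fin n) ℂ) (lam : Fin m → ℂ) (μ : Fin n → ℂ)
    (hP : IsUnit P.det) (hQ : IsUnit Q.det)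
    (hA : P⁻¹ * A * P = Matrix.diagonal lam)
    (hB : Q⁻¹ * B * Q = Matrix.diagonal μ)
    (p : Fin (k + 1) → Fin (l + 1) → ℂ) :
    ∑ i : Fin (k + 1), ∑ j : Fin (l + 1),
        p i j • (A ^ (i : ℕ) * C * Bᵀ ^ (j : ℕ)) =
    P * (Matrix.of fun a b =>
        (∑ i : Fin (k + 1), ∑ j : Fin (l + 1),
          p i j * lam a ^ (i : ℕ) * μ b ^ (j : ℕ)) * (P⁻¹ * C * (Q⁻¹)ᵀ) a b) * Qᵀ := by
  have hP1 : P * P⁻¹ = 1 := Matrix.mul_nonsing_inv P hP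
  have hP2 : P⁻¹ * P = 1 := Matrix.nonsing_inv_mul P hP
  have hQ1 : Q * Q⁻¹ = 1 := Matrix.mul_nonsing_inv Q hQ
  have hQ2 : Q⁻¹ * Q = 1 := Matrix.nonsing_inv_mul Q hQ
  have hA' : A = P * Matrix.diagonal lam * P⁻¹ := by
    rw [← hA]
    have : P * (P⁻¹ * A * P) * P⁻¹ = (P * P⁻¹) * A * (P * P⁻¹) := by
      simp only [Matrix.mul_assoc]
    rw [this, hP1]; simp
  have hB' : Bᵀ = (Q⁻¹)ᵀ * Matrix.diagonal μ * Qᵀ := by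
    have hBe : B = Q * Matrix.diagonal μ * Q⁻¹ := by
      rw [← hB]
      have : Q * (Q⁻¹ * B * Q) * Q⁻¹ = (Q * Q⁻¹) * B * (Q * Q⁻¹) := by
        simp only [Matrix.mul_assoc]
      rw [this, hQ1]; simp
    rw [hBe]
    simp [Matrix.transpose_mul, Matrix.diagonal_transpose, Matrix.mul_assoc]
  have hQt1 : (Q⁻¹)ᵀ * Qᵀ = 1 := by rw [← Matrix.transpose_mul, hQ1, Matrix.transpose_one]
  have hQt2 : Qᵀ * (Q⁻¹)ᵀ = 1 := by rw [← Matrix.transpose_mul, hQ2, Matrix.transpose_one]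
  have hApow : ∀ i : ℕ, A ^ i = P * Matrix.diagonal (fun a => lam a ^ i) * P⁻¹ := by
    intro i
    rw [hA', conj_pow_aux P P⁻¹ _ hP1 hP2, Matrix.diagonal_pow]
    rfl
  have hBpow : ∀ j : ℕ, Bᵀ ^ j = (Q⁻¹)ᵀ * Matrix.diagonal (fun b => μ b ^ j) * Qᵀ := by
    intro j
    rw [hB', conj_pow_aux (Q⁻¹)ᵀ Qᵀ _ hQt1 hQt2, Matrix.diagonal_pow]
    rfl
  have key : ∀ (i j : ℕ),
      A ^ i * C * Bᵀ ^ j =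
      P * (Matrix.diagonal (fun a => lam a ^ i) * (P⁻¹ * C * (Q⁻¹)ᵀ) *
        Matrix.diagonal (fun b => μ b ^ j)) * Qᵀ := by
    intro i j
    rw [hApow i, hBpow j]
    simp only [Matrix.mul_assoc]
  calc ∑ i : Fin (k + 1), ∑ j : Fin (l + 1),
        p i j • (A ^ (i : ℕ) * C * Bᵀ ^ (j : ℕ))
      = P * (∑ i : Fin (k + 1), ∑ j : Fin (l + 1),
          p i j • (Matrix.diagonal (fun a => lam a ^ (i : ℕ)) * (P⁻¹ * C * (Q⁻¹)ᵀ) *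
            Matrix.diagonal (fun b => μ b ^ (j : ℕ)))) * Qᵀ := by
        simp only [key, Matrix.mul_sum, Matrix.sum_mul, Matrix.mul_smul, Matrix.smul_mul]
    _ = _ := by
        congr 2
        ext a b
        simp only [Matrix.sum_apply, Matrix.smul_apply, Matrix.of_apply,
          Matrix.diagonal_mul, Matrix.mul_diagonal, Finset.sum_mul, smul_eq_mul]
        apply Finset.sum_congr rfl
        intro i _
        apply Finset.sum_congr rfl
        intro j _
        ring
end

section
/- Let A ∈ ℂ^{m×m} and B ∈ ℂ^{n×n} be Hermitian matrices with eigenvalues λ_1, ..., λ_m and μ_1, ..., μ_n, respectively. Then for every bivariate polynomial p(x,y) = Σ_{i=0}^{k} Σ_{j=0}^{ℓ} p_{ij} x^i y^j and every C ∈ ℂ^{m×n}, ‖p{A,B}(C)‖_F ≤ ( max_{a,b} |p(λ_a, μ_b)| ) · ‖C‖_F, where ‖·‖_F denotes the Frobenius norm. -/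
open Matrix

/-- Frobenius norm of a complex matrix. -/
noncomputable def frobNorm {m n : ℕ} (M : Matrix (Fin m) (Fin n) ℂ) : ℝ :=
  Real.sqrt (∑ a, ∑ b, ‖M a b‖ ^ 2)

/-- Squared Frobenius norm. -/
noncomputable def frobSq {m n : ℕ} (M : Matrix (Fin m) (Fin n) ℂ) : ℝ :=
  ∑ a, ∑ b, ‖M a b‖ ^ 2

lemma frobNorm_eq_sqrt_frobSq {m n : ℕ} (M : Matrix (Fin m) (Fin n) ℂ) :
    frobNorm M = Real.sqrt (frobSq M) := rfl

lemma star_mul_self_re (z : ℂ) : (star z * z).re = ‖z‖ ^ 2 := by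
  rw [Complex.star_def, mul_comm, Complex.mul_conj, Complex.ofReal_re,
    Complex.normSq_eq_norm_sq]

lemma frobSq_eq_trace {m n : ℕ} (M : Matrix (Fin m) (Fin n) ℂ) :
    frobSq M = (Matrix.trace (Mᴴ * M)).re := by
  calc frobSq M = ∑ a, ∑ b, (star (M a b) * M a b).re :=
        Finset.sum_congr rfl fun a _ => Finset.sum_congr rfl fun b _ =>
          (star_mul_self_re _).symm
    _ = ∑ b, ∑ a, (star (M a b) * M a b).re := Finset.sum_comm
    _ = (Matrix.trace (Mᴴ * M)).re := by
        simp only [Matrix.trace, Matrix.diag_apply, Matrix.mul_apply,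
          Matrix.conjTranspose_apply, Complex.re_sum]

lemma frobSq_mul_left {m n : ℕ} (U : Matrix (Fin m) (Fin m) ℂ)
    (hU : Uᴴ * U = 1) (X : Matrix (Fin m) (Fin n) ℂ) :
    frobSq (U * X) = frobSq X := by
  rw [frobSq_eq_trace, frobSq_eq_trace, Matrix.conjTranspose_mul,
    Matrix.mul_assoc Xᴴ Uᴴ, ← Matrix.mul_assoc Uᴴ U X, hU, Matrix.one_mul]

lemma frobSq_mul_right {m n : ℕ} (P : Matrix (Fin n) (Fin n) ℂ)
    (hP : P * Pᴴ = 1) (X : Matrix (Fin m) (Fin n) ℂ) :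
    frobSq (X * P) = frobSq X := by
  rw [frobSq_eq_trace, frobSq_eq_trace, Matrix.conjTranspose_mul,
    Matrix.trace_mul_comm, Matrix.mul_assoc X P, ← Matrix.mul_assoc P Pᴴ Xᴴ, hP,
    Matrix.one_mul, Matrix.trace_mul_comm]

lemma conj_pow_aux_s4 {m : ℕ} (U D : Matrix (Fin m) (Fin m) ℂ)
    (h1 : Uᴴ * U = 1) (h2 : U * Uᴴ = 1) (i : ℕ) :
    (U * D * Uᴴ) ^ i = U * D ^ i * Uᴴ := by
  induction i with
  | zero => simp [h2]
  | succ i ih =>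
      rw [pow_succ, pow_succ, ih]
      calc U * D ^ i * Uᴴ * (U * D * Uᴴ) = U * D ^ i * (Uᴴ * U) * D * Uᴴ := by noncomm_ring
        _ = U * (D ^ i * D) * Uᴴ := by rw [h1]; noncomm_ring

/-- Norm estimate for bivariate polynomial matrix functions of two Hermitian matrices
(part (a), M = 1, of the norm estimate lemma):
`‖p{A,B}(C)‖_F ≤ max_{a,b} |p(λ_a, μ_b)| · ‖C‖_F`. -/
theorem bivariate_norm_estimate_hermitian {m n k l : ℕ} (hm : 0 < m) (hn : 0 < n)
    (A : Matrix (Fin m) (Fin m) ℂ) (B : Matrix (Fin n) (Fin n) ℂ)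
    (hA : A.IsHermitian) (hB : B.IsHermitian)
    (p : Fin (k + 1) → Fin (l + 1) → ℂ) (C : Matrix (Fin m) (Fin n) ℂ) :
    frobNorm (∑ i : Fin (k + 1), ∑ j : Fin (l + 1),
        p i j • (A ^ (i : ℕ) * C * Bᵀ ^ (j : ℕ))) ≤
      (Finset.univ.sup' ⟨(⟨0, hm⟩, ⟨0, hn⟩), Finset.mem_univ _⟩
        fun ab : Fin m × Fin n =>
          ‖∑ i : Fin (k + 1), ∑ j : Fin (l + 1),
            p i j * (hA.eigenvalues ab.1 : ℂ) ^ (i : ℕ) *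
              (hB.eigenvalues ab.2 : ℂ) ^ (j : ℕ)‖) * frobNorm C := by
  classical
  set U : Matrix (Fin m) (Fin m) ℂ := (hA.eigenvectorUnitary : Matrix (Fin m) (Fin m) ℂ) with hUdef
  set V : Matrix (Fin n) (Fin n) ℂ := (hB.eigenvectorUnitary : Matrix (Fin n) (Fin n) ℂ) with hVdef
  have hU1 : Uᴴ * U = 1 := by
    rw [← Matrix.star_eq_conjTranspose]
    exact Matrix.mem_unitaryGroup_iff'.mp (hA.eigenvectorUnitary).2
  have hU2 : U * Uᴴ = 1 := by
    rw [← Matrix.star_eq_conjTranspose]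
    exact Matrix.mem_unitaryGroup_iff.mp (hA.eigenvectorUnitary).2
  have hV1 : Vᴴ * V = 1 := by
    rw [← Matrix.star_eq_conjTranspose]
    exact Matrix.mem_unitaryGroup_iff'.mp (hB.eigenvectorUnitary).2
  have hV2 : V * Vᴴ = 1 := by
    rw [← Matrix.star_eq_conjTranspose]
    exact Matrix.mem_unitaryGroup_iff.mp (hB.eigenvectorUnitary).2
  set f : Fin m → ℂ := fun a => (hA.eigenvalues a : ℂ) with hfdef
  set g : Fin n → ℂ := fun b => (hB.eigenvalues b : ℂ) with hgdef
  have hAspec : A = U * diagonal f * Uᴴ := by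
    rw [← Matrix.star_eq_conjTranspose]
    exact hA.spectral_theorem
  have hBspec : B = V * diagonal g * Vᴴ := by
    rw [← Matrix.star_eq_conjTranspose]
    exact hB.spectral_theorem
  set W : Matrix (Fin n) (Fin n) ℂ := Vᴴᵀ with hWdef
  have hWH : Wᴴ = Vᵀ := by
    ext i j
    simp [hWdef, Matrix.conjTranspose_apply, Matrix.transpose_apply]
  have hW1 : Wᴴ * W = 1 := by
    rw [hWH, hWdef, ← Matrix.transpose_mul, hV1, Matrix.transpose_one]
  have hW2 : W * Wᴴ = 1 := by
    rw [hWH, hWdef, ← Matrix.transpose_mul, hV2, Matrix.transpose_one]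
  have hBT : Bᵀ = W * diagonal g * Wᴴ := by
    rw [hBspec, Matrix.transpose_mul, Matrix.transpose_mul, hWH, hWdef,
      Matrix.diagonal_transpose, Matrix.mul_assoc]
  set M : Matrix (Fin m) (Fin n) ℂ := Uᴴ * C * W with hMdef
  set q : Fin m → Fin n → ℂ := fun a b =>
    ∑ i : Fin (k + 1), ∑ j : Fin (l + 1), p i j * f a ^ (i : ℕ) * g b ^ (j : ℕ) with hqdef
  set N : Matrix (Fin m) (Fin n) ℂ := Matrix.of fun a b => q a b * M a b with hNdef
  have hentry : ∀ (i j : ℕ) (a : Fin m) (b : Fin n),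
      (diagonal f ^ i * M * diagonal g ^ j) a b = f a ^ i * M a b * g b ^ j := by
    intro i j a b
    rw [Matrix.diagonal_pow, Matrix.diagonal_pow, Matrix.mul_diagonal, Matrix.diagonal_mul,
      Pi.pow_apply, Pi.pow_apply]
  -- Step 1: the polynomial expression equals U * N * Wᴴ
  have hS : (∑ i : Fin (k + 1), ∑ j : Fin (l + 1),
      p i j • (A ^ (i : ℕ) * C * Bᵀ ^ (j : ℕ))) = U * N * Wᴴ := by
    have hterm : ∀ (i : Fin (k + 1)) (j : Fin (l + 1)),
        p i j • (A ^ (i : ℕ) * C * Bᵀ ^ (j : ℕ)) =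
        U * (p i j • (diagonal f ^ (i : ℕ) * M * diagonal g ^ (j : ℕ))) * Wᴴ := by
      intro i j
      rw [hAspec, hBT, conj_pow_aux_s4 U (diagonal f) hU1 hU2, conj_pow_aux_s4 W (diagonal g) hW1 hW2,
        hMdef, Matrix.mul_smul, Matrix.smul_mul]
      congr 1
      simp only [Matrix.mul_assoc]
    calc (∑ i : Fin (k + 1), ∑ j : Fin (l + 1), p i j • (A ^ (i : ℕ) * C * Bᵀ ^ (j : ℕ)))
        = ∑ i : Fin (k + 1), ∑ j : Fin (l + 1),
            U * (p i j • (diagonal f ^ (i : ℕ) * M * diagonal g ^ (j : ℕ))) * Wᴴ := by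
          refine Finset.sum_congr rfl fun i _ => Finset.sum_congr rfl fun j _ => hterm i j
      _ = U * (∑ i : Fin (k + 1), ∑ j : Fin (l + 1),
            p i j • (diagonal f ^ (i : ℕ) * M * diagonal g ^ (j : ℕ))) * Wᴴ := by
          rw [Matrix.mul_sum, Matrix.sum_mul]
          refine Finset.sum_congr rfl fun i _ => ?_
          rw [Matrix.mul_sum, Matrix.sum_mul]
      _ = U * N * Wᴴ := by
          congr 1
          congr 1
          ext a b
          simp only [Matrix.sum_apply, Matrix.smul_apply, hentry, smul_eq_mul,
            hNdef, Matrix.of_apply, hqdef]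
          rw [Finset.sum_mul]
          refine Finset.sum_congr rfl fun i _ => ?_
          rw [Finset.sum_mul]
          refine Finset.sum_congr rfl fun j _ => ?_
          ring
  have hC : C = U * M * Wᴴ := by
    show C = U * (Uᴴ * C * W) * Wᴴ
    rw [Matrix.mul_assoc Uᴴ C W, ← Matrix.mul_assoc U Uᴴ (C * W), hU2, Matrix.one_mul,
      Matrix.mul_assoc C W Wᴴ, hW2, Matrix.mul_one]
  have hWH2 : Wᴴ * Wᴴᴴ = 1 := by rwa [Matrix.conjTranspose_conjTranspose]
  have hSN : frobSq (U * N * Wᴴ) = frobSq N := by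
    rw [Matrix.mul_assoc, frobSq_mul_left U hU1, frobSq_mul_right Wᴴ hWH2]
  have hCM : frobSq C = frobSq M := by
    rw [hC, Matrix.mul_assoc, frobSq_mul_left U hU1, frobSq_mul_right Wᴴ hWH2]
  set K : ℝ := (Finset.univ.sup' ⟨(⟨0, hm⟩, ⟨0, hn⟩), Finset.mem_univ _⟩
      fun ab : Fin m × Fin n => ‖q ab.1 ab.2‖) with hKdef
  have hqK : ∀ a b, ‖q a b‖ ≤ K :=
    fun a b => Finset.le_sup' (f := fun ab : Fin m × Fin n => ‖q ab.1 ab.2‖)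
      (Finset.mem_univ (a, b))
  have hK0 : 0 ≤ K := le_trans (norm_nonneg _) (hqK ⟨0, hm⟩ ⟨0, hn⟩)
  have hNle : frobSq N ≤ K ^ 2 * frobSq M := by
    rw [frobSq, frobSq, Finset.mul_sum]
    refine Finset.sum_le_sum fun a _ => ?_
    rw [Finset.mul_sum]
    refine Finset.sum_le_sum fun b _ => ?_
    have hNab : ‖N a b‖ = ‖q a b‖ * ‖M a b‖ := norm_mul _ _
    rw [hNab, mul_pow]
    exact mul_le_mul_of_nonneg_right
      (pow_le_pow_left₀ (norm_nonneg _) (hqK a b) 2) (sq_nonneg _)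
  rw [hS]
  calc frobNorm (U * N * Wᴴ) = Real.sqrt (frobSq N) := by
        rw [frobNorm_eq_sqrt_frobSq, hSN]
    _ ≤ Real.sqrt (K ^ 2 * frobSq C) := Real.sqrt_le_sqrt (by rw [hCM]; exact hNle)
    _ = K * Real.sqrt (frobSq C) := by
        rw [Real.sqrt_mul (sq_nonneg K), Real.sqrt_sq hK0]
    _ = K * frobNorm C := by rw [frobNorm_eq_sqrt_frobSq]
end

section
/- Let A ∈ ℂ^{m×m} be arbitrary and let B ∈ ℂ^{n×n} be Hermitian with eigenvalues μ_1, ..., μ_n. Then for every bivariate polynomial p(x,y) = Σ_{i=0}^{k} Σ_{j=0}^{ℓ} p_{ij} x^i y^j and every C ∈ ℂ^{m×n}, ‖p{A,B}(C)‖_F ≤ ( max_{1 ≤ b ≤ n} ‖p_{μ_b}(A)‖_2 ) · ‖C‖_F, where p_μ(A) := Σ_{i=0}^{k} (Σ_{j=0}^{ℓ} p_{ij} μ^j) A^i and ‖·‖_2 denotes the spectral (operator 2-) norm. -/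
open Matrix

/-- Spectral norm (operator 2-norm) of a square complex matrix. -/
noncomputable def specNorm {m : ℕ} (M : Matrix (Fin m) (Fin m) ℂ) : ℝ :=
  ‖Matrix.toEuclideanCLM (𝕜 := ℂ) M‖

lemma vecMul_unitary_sq_sum {n : ℕ} (W : Matrix (Fin n) (Fin n) ℂ)
    (hW : W * Wᴴ = 1) (x : Fin n → ℂ) :
    ∑ b, ‖(x ᵥ* W) b‖ ^ 2 = ∑ b, ‖x b‖ ^ 2 := by
  have key : (x ᵥ* W) ⬝ᵥ star (x ᵥ* W) = x ⬝ᵥ star x := by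
    rw [star_vecMul, dotProduct_mulVec, vecMul_vecMul, hW, vecMul_one]
  have h1 : ∀ z : Fin n → ℂ, (z ⬝ᵥ star z).re = ∑ b, ‖z b‖ ^ 2 := by
    intro z
    simp [dotProduct, Complex.mul_conj']
    norm_cast
  rw [← h1, ← h1, key]

lemma mulVec_sq_sum_le {m : ℕ} (N : Matrix (Fin m) (Fin m) ℂ) (x : Fin m → ℂ) :
    ∑ a, ‖(N *ᵥ x) a‖ ^ 2 ≤ specNorm N ^ 2 * ∑ a, ‖x a‖ ^ 2 := by
  have h := (Matrix.toEuclideanCLM (𝕜 := ℂ) N).le_opNorm ((WithLp.equiv 2 _).symm x)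
  change ‖(WithLp.equiv 2 (Fin m → ℂ)).symm (N *ᵥ x)‖ ≤ specNorm N * ‖(WithLp.equiv 2 (Fin m → ℂ)).symm x‖ at h
  have e : ∀ y : Fin m → ℂ, ‖(WithLp.equiv 2 (Fin m → ℂ)).symm y‖ ^ 2 = ∑ a, ‖y a‖ ^ 2 := by
    intro y
    rw [EuclideanSpace.norm_eq, Real.sq_sqrt (by positivity)]
    rfl
  calc ∑ a, ‖(N *ᵥ x) a‖ ^ 2 = ‖(WithLp.equiv 2 (Fin m → ℂ)).symm (N *ᵥ x)‖ ^ 2 := (e _).symm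
    _ ≤ (specNorm N * ‖(WithLp.equiv 2 (Fin m → ℂ)).symm x‖) ^ 2 := by
        apply pow_le_pow_left₀ (norm_nonneg _) h
    _ = _ := by rw [mul_pow, e x]

lemma frob_sq_mul_unitary {m n : ℕ} (M : Matrix (Fin m) (Fin n) ℂ)
    (W : Matrix (Fin n) (Fin n) ℂ) (hW : W * Wᴴ = 1) :
    ∑ a, ∑ b, ‖(M * W) a b‖ ^ 2 = ∑ a, ∑ b, ‖M a b‖ ^ 2 := by
  refine Finset.sum_congr rfl fun a _ => ?_
  have : (fun b => (M * W) a b) = (M a) ᵥ* W := by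
    ext b; simp [Matrix.mul_apply, vecMul, dotProduct]
  calc ∑ b, ‖(M * W) a b‖ ^ 2 = ∑ b, ‖((M a) ᵥ* W) b‖ ^ 2 := by
        refine Finset.sum_congr rfl fun b _ => ?_
        rw [show (M * W) a b = ((M a) ᵥ* W) b from congrFun this b]
    _ = _ := vecMul_unitary_sq_sum W hW (M a)

/-- Key estimate from part (b) of the norm estimate lemma: for arbitrary `A` and
Hermitian `B` with eigenvalues `μ_b`,
`‖p{A,B}(C)‖_F ≤ max_b ‖p_{μ_b}(A)‖₂ · ‖C‖_F`, where `p_μ(A) = Σᵢ (Σⱼ pᵢⱼ μʲ) Aⁱ`. -/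
theorem bivariate_norm_estimate_one_hermitian {m n k l : ℕ} (hn : 0 < n)
    (A : Matrix (Fin m) (Fin m) ℂ) (B : Matrix (Fin n) (Fin n) ℂ)
    (hB : B.IsHermitian)
    (p : Fin (k + 1) → Fin (l + 1) → ℂ) (C : Matrix (Fin m) (Fin n) ℂ) :
    frobNorm (∑ i : Fin (k + 1), ∑ j : Fin (l + 1),
        p i j • (A ^ (i : ℕ) * C * Bᵀ ^ (j : ℕ))) ≤
      (Finset.univ.sup' ⟨⟨0, hn⟩, Finset.mem_univ _⟩
        fun b : Fin n =>
          specNorm (∑ i : Fin (k + 1),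
            (∑ j : Fin (l + 1), p i j * (hB.eigenvalues b : ℂ) ^ (j : ℕ)) • A ^ (i : ℕ)))
        * frobNorm C := by
  classical
  set U : Matrix (Fin n) (Fin n) ℂ := (hB.eigenvectorUnitary : Matrix (Fin n) (Fin n) ℂ) with hUdef
  have hU1 : U * Uᴴ = 1 := by
    have := (Matrix.mem_unitaryGroup_iff).mp hB.eigenvectorUnitary.2
    simpa [Matrix.star_eq_conjTranspose] using this
  have hU2 : Uᴴ * U = 1 := by
    have := (Matrix.mem_unitaryGroup_iff').mp hB.eigenvectorUnitary.2
    simpa [Matrix.star_eq_conjTranspose] using this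
  set V : Matrix (Fin n) (Fin n) ℂ := Uᴴᵀ with hVdef
  have hVH : Vᴴ = Uᵀ := by
    ext a b; simp [hVdef, conjTranspose_apply]
  have hV1 : V * Vᴴ = 1 := by
    rw [hVdef, hVH, ← Matrix.transpose_mul, hU1, Matrix.transpose_one]
  have hV2 : Vᴴ * V = 1 := by
    rw [hVdef, hVH, ← Matrix.transpose_mul, hU2, Matrix.transpose_one]
  set d : Fin n → ℂ := fun b => (hB.eigenvalues b : ℂ) with hddef
  have hBt : Bᵀ = V * diagonal d * Vᴴ := by
    conv_lhs => rw [hB.spectral_theorem, Unitary.conjStarAlgAut_apply]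
    rw [hVH, hVdef]
    rw [Matrix.transpose_mul, Matrix.transpose_mul, Matrix.diagonal_transpose,
      ← Matrix.star_eq_conjTranspose U]
    rw [mul_assoc]
    congr 1
  have hpow : ∀ j : ℕ, (Bᵀ) ^ j = V * (diagonal d) ^ j * Vᴴ := by
    intro j
    induction j with
    | zero => simp [hV1]
    | succ j ih =>
        rw [pow_succ, ih, hBt, pow_succ]
        have : Vᴴ * (V * (diagonal d * Vᴴ)) = diagonal d * Vᴴ := by
          rw [← mul_assoc, hV2, one_mul]
        simp only [mul_assoc, this]
  set E : Matrix (Fin m) (Fin n) ℂ := C * V with hEdef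
  set N : Fin n → Matrix (Fin m) (Fin m) ℂ := fun b =>
    ∑ i : Fin (k + 1), (∑ j : Fin (l + 1), p i j * d b ^ (j : ℕ)) • A ^ (i : ℕ) with hNdef
  set S : ℝ := Finset.univ.sup' ⟨⟨0, hn⟩, Finset.mem_univ _⟩ fun b : Fin n => specNorm (N b)
    with hSdef
  have hSb : ∀ b, specNorm (N b) ≤ S := fun b => Finset.le_sup' (fun b => specNorm (N b)) (Finset.mem_univ b)
  have hS0 : 0 ≤ S := le_trans (norm_nonneg _) (hSb ⟨0, hn⟩)
  set M : Matrix (Fin m) (Fin n) ℂ :=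
    ∑ i : Fin (k + 1), ∑ j : Fin (l + 1),
      p i j • (A ^ (i : ℕ) * E * (diagonal d) ^ (j : ℕ)) with hMdef
  have hLHS : (∑ i : Fin (k + 1), ∑ j : Fin (l + 1),
      p i j • (A ^ (i : ℕ) * C * Bᵀ ^ (j : ℕ))) = M * Vᴴ := by
    rw [hMdef, Matrix.sum_mul]
    refine Finset.sum_congr rfl fun i _ => ?_
    rw [Matrix.sum_mul]
    refine Finset.sum_congr rfl fun j _ => ?_
    rw [hpow (j : ℕ), Matrix.smul_mul, hEdef]
    congr 1
    simp only [Matrix.mul_assoc]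
  have hentry : ∀ b a, M a b = (N b *ᵥ fun c => E c b) a := by
    intro b a
    rw [hMdef, hNdef]
    simp only [Matrix.sum_apply, Matrix.smul_apply, smul_eq_mul, Matrix.diagonal_pow,
      Matrix.mul_diagonal, Pi.pow_apply, mulVec, dotProduct, Finset.sum_mul]
    conv_rhs => rw [Finset.sum_comm]
    refine Finset.sum_congr rfl fun i _ => ?_
    simp only [Matrix.mul_apply, Finset.sum_mul, Finset.mul_sum]
    conv_rhs => rw [Finset.sum_comm]
    refine Finset.sum_congr rfl fun j _ => ?_
    refine Finset.sum_congr rfl fun c _ => ?_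
    ring
  have colbound : ∀ b, (∑ a, ‖M a b‖ ^ 2) ≤ S ^ 2 * ∑ a, ‖E a b‖ ^ 2 := by
    intro b
    calc (∑ a, ‖M a b‖ ^ 2) = ∑ a, ‖(N b *ᵥ fun c => E c b) a‖ ^ 2 := by
          exact Finset.sum_congr rfl fun a _ => by rw [hentry b a]
      _ ≤ specNorm (N b) ^ 2 * ∑ a, ‖E a b‖ ^ 2 := mulVec_sq_sum_le _ _
      _ ≤ S ^ 2 * ∑ a, ‖E a b‖ ^ 2 := by
          apply mul_le_mul_of_nonneg_right
            (pow_le_pow_left₀ (norm_nonneg _) (hSb b) 2) (by positivity)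
  have hEC : ∑ a, ∑ b, ‖E a b‖ ^ 2 = ∑ a, ∑ b, ‖C a b‖ ^ 2 :=
    frob_sq_mul_unitary C V hV1
  have main : ∑ a, ∑ b, ‖M a b‖ ^ 2 ≤ S ^ 2 * ∑ a, ∑ b, ‖C a b‖ ^ 2 := by
    rw [Finset.sum_comm]
    calc ∑ b, ∑ a, ‖M a b‖ ^ 2 ≤ ∑ b, S ^ 2 * ∑ a, ‖E a b‖ ^ 2 :=
          Finset.sum_le_sum fun b _ => colbound b
      _ = S ^ 2 * ∑ b, ∑ a, ‖E a b‖ ^ 2 := by rw [Finset.mul_sum]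
      _ = S ^ 2 * ∑ a, ∑ b, ‖C a b‖ ^ 2 := by rw [Finset.sum_comm, hEC]
  rw [hLHS]
  show frobNorm (M * Vᴴ) ≤ S * frobNorm C
  have hMV : Vᴴ * (Vᴴ)ᴴ = 1 := by rw [Matrix.conjTranspose_conjTranspose, hV2]
  unfold frobNorm
  rw [frob_sq_mul_unitary M Vᴴ hMV]
  calc Real.sqrt (∑ a, ∑ b, ‖M a b‖ ^ 2)
      ≤ Real.sqrt (S ^ 2 * ∑ a, ∑ b, ‖C a b‖ ^ 2) := Real.sqrt_le_sqrt main
    _ = S * Real.sqrt (∑ a, ∑ b, ‖C a b‖ ^ 2) := by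
        rw [Real.sqrt_mul (by positivity), Real.sqrt_sq hS0]
end

section
/- Let A ∈ ℂ^{m×m} and B ∈ ℂ^{n×n} be Hermitian, with unitary P, Q and real diagonal matrices such that P* A P = diag(λ_1,...,λ_m) and Q* B Q = diag(μ_1,...,μ_n). Let c ∈ ℂ^m, d ∈ ℂ^n, and let U ∈ ℂ^{m×k} have orthonormal columns spanning span{c, Ac, ..., A^{k-1}c} (assumed of dimension k) and V ∈ ℂ^{n×ℓ} have orthonormal columns spanning span{d, Bd, ..., B^{ℓ-1}d} (assumed of dimension ℓ). Set G = U* A U and H = V* B V (which are Hermitian); let P̂, Q̂ be unitary with P̂* G P̂ = diag(γ_1,...,γ_k), Q̂* H Q̂ = diag(η_1,...,η_ℓ). Let [a_A, b_A] and [a_B, b_B] be real intervals with all λ_a ∈ [a_A, b_A] and all μ_b ∈ [a_B, b_B] (then also all γ_i ∈ [a_A, b_A] and all η_j ∈ [a_B, b_B]). Let f : ℝ × ℝ → ℂ be any function, and define X_f = P ( (f(λ_a, μ_b))_{a,b} ∘ (P* (c d^T) Q̄) ) Q^T and Y_f = P̂ ( (f(γ_i, η_j))_{i,j} ∘ (P̂*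 (U* c)(V* d)^T Q̂̄) ) Q̂^T. Then for every bivariate polynomial p(x,y) = Σ_{i=0}^{k-1} Σ_{j=0}^{ℓ-1} p_{ij} x^i y^j of bidegree at most (k−1, ℓ−1): ‖X_f − U Y_f V^T‖_F ≤ 2 ‖c‖_2 ‖d‖_2 · max_{x ∈ [a_A,b_A], y ∈ [a_B,b_B]} |f(x,y) − p(x,y)|. -/
open Matrix

/-- Euclidean norm of a complex vector. -/
noncomputable def euclNorm {m : ℕ} (c : Fin m → ℂ) : ℝ :=
  Real.sqrt (∑ a, ‖c a‖ ^ 2)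

section Aux

attribute [local instance] Matrix.frobeniusSeminormedAddCommGroup

private lemma frobNorm_eq_norm {m n : ℕ} (M : Matrix (Fin m) (Fin n) ℂ) : frobNorm M = ‖M‖ := by
  rw [Matrix.frobenius_norm_def, frobNorm, Real.sqrt_eq_rpow]
  congr 1
  refine Finset.sum_congr rfl fun a _ => Finset.sum_congr rfl fun b _ => ?_
  rw [show ((2:ℝ)) = ((2:ℕ):ℝ) by norm_num, Real.rpow_natCast]

private lemma frobNorm_sub_le {m n : ℕ} (X Y : Matrix (Fin m) (Fin n) ℂ) :
    frobNorm (X - Y) ≤ frobNorm X + frobNorm Y := by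
  simp only [frobNorm_eq_norm]; exact norm_sub_le X Y

private lemma conj_mul_self (z : ℂ) : star z * z = ((‖z‖ ^ 2 : ℝ) : ℂ) := by
  rw [show (star z) = (starRingEnd ℂ) z from rfl]
  simp [Complex.conj_mul', Complex.mul_conj]

private lemma dot_star_self {a : ℕ} (v : Fin a → ℂ) :
    star v ⬝ᵥ v = ((∑ s, ‖v s‖ ^ 2 : ℝ) : ℂ) := by
  simp only [dotProduct, Pi.star_apply]
  push_cast
  exact Finset.sum_congr rfl fun s _ => by rw [conj_mul_self]; push_cast; ring

private lemma dot_conj_eq {a b : ℕ} (W : Matrix (Fin a) (Fin b) ℂ) (hW : Wᴴ * W = 1)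
    (x : Fin b → ℂ) : star (W *ᵥ x) ⬝ᵥ (W *ᵥ x) = star x ⬝ᵥ x := by
  rw [star_mulVec, dotProduct_mulVec, vecMul_vecMul, hW, vecMul_one]

private lemma nsq_mulVec_eq {a b : ℕ} (W : Matrix (Fin a) (Fin b) ℂ) (hW : Wᴴ * W = 1)
    (x : Fin b → ℂ) : ∑ i, ‖(W *ᵥ x) i‖ ^ 2 = ∑ i, ‖x i‖ ^ 2 := by
  have h := dot_conj_eq W hW x
  rw [dot_star_self, dot_star_self] at h
  exact_mod_cast h

private lemma euclNorm_mulVec_eq {a b : ℕ} (W : Matrix (Fin a) (Fin b) ℂ) (hW : Wᴴ * W = 1)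
    (x : Fin b → ℂ) : euclNorm (W *ᵥ x) = euclNorm x := by
  rw [euclNorm, euclNorm, nsq_mulVec_eq W hW]

private lemma nsq_proj_le {a b : ℕ} (U : Matrix (Fin a) (Fin b) ℂ) (hU : Uᴴ * U = 1)
    (c : Fin a → ℂ) : ∑ i, ‖(Uᴴ *ᵥ c) i‖ ^ 2 ≤ ∑ i, ‖c i‖ ^ 2 := by
  have h1 : star c ⬝ᵥ (U *ᵥ (Uᴴ *ᵥ c)) = star (Uᴴ *ᵥ c) ⬝ᵥ (Uᴴ *ᵥ c) := by
    rw [dotProduct_mulVec]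
    congr 1
    rw [star_mulVec, conjTranspose_conjTranspose]
  have h2 : star (U *ᵥ (Uᴴ *ᵥ c)) ⬝ᵥ c = star (Uᴴ *ᵥ c) ⬝ᵥ (Uᴴ *ᵥ c) := by
    rw [star_mulVec, ← dotProduct_mulVec]
  have h3 : star (U *ᵥ (Uᴴ *ᵥ c)) ⬝ᵥ (U *ᵥ (Uᴴ *ᵥ c)) = star (Uᴴ *ᵥ c) ⬝ᵥ (Uᴴ *ᵥ c) :=
    dot_conj_eq U hU _
  have key : star (c - U *ᵥ (Uᴴ *ᵥ c)) ⬝ᵥ (c - U *ᵥ (Uᴴ *ᵥ c))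
      = star c ⬝ᵥ c - star (Uᴴ *ᵥ c) ⬝ᵥ (Uᴴ *ᵥ c) := by
    rw [star_sub, sub_dotProduct, dotProduct_sub, dotProduct_sub, h1, h2, h3]
    ring
  rw [dot_star_self, dot_star_self, dot_star_self] at key
  have key' : (∑ i, ‖(c - U *ᵥ (Uᴴ *ᵥ c)) i‖ ^ 2)
      = (∑ i, ‖c i‖ ^ 2) - ∑ i, ‖(Uᴴ *ᵥ c) i‖ ^ 2 := by exact_mod_cast key
  have hnn : (0:ℝ) ≤ ∑ i, ‖(c - U *ᵥ (Uᴴ *ᵥ c)) i‖ ^ 2 :=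
    Finset.sum_nonneg fun _ _ => sq_nonneg _
  linarith

private lemma quad_diag_entry {a b : ℕ} (M : Matrix (Fin a) (Fin b) ℂ)
    (N : Matrix (Fin a) (Fin a) ℂ) (i : Fin b) :
    (Mᴴ * N * M) i i = star (fun s => M s i) ⬝ᵥ (N *ᵥ fun s => M s i) := by
  simp only [mul_apply, mulVec, dotProduct, conjTranspose_apply, Pi.star_apply,
    Finset.sum_mul, Finset.mul_sum]
  rw [Finset.sum_comm]
  exact Finset.sum_congr rfl fun s _ => Finset.sum_congr rfl fun t _ => by ring

private lemma col_dot {a b : ℕ} (M : Matrix (Fin a) (Fin b) ℂ) (i : Fin b) :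
    star (fun s => M s i) ⬝ᵥ (fun s => M s i) = (Mᴴ * M) i i := by
  simp [mul_apply, dotProduct, conjTranspose_apply]

private lemma dot_diag {a : ℕ} (w : Fin a → ℝ) (y : Fin a → ℂ) :
    star y ⬝ᵥ ((diagonal fun s => (w s : ℂ)) *ᵥ y) = ((∑ s, w s * ‖y s‖ ^ 2 : ℝ) : ℂ) := by
  simp only [dotProduct, Pi.star_apply, mulVec_diagonal]
  push_cast
  refine Finset.sum_congr rfl fun s _ => ?_
  rw [show star (y s) * ((w s : ℂ) * y s) = (w s : ℂ) * (star (y s) * y s) by ring,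
    conj_mul_self]
  push_cast; ring

private lemma unconj {a : ℕ} (P A D : Matrix (Fin a) (Fin a) ℂ) (hPP : P * Pᴴ = 1)
    (h : Pᴴ * A * P = D) : A = P * D * Pᴴ := by
  have h1 : A = P * (Pᴴ * A * P) * Pᴴ := by
    have h2 : (P * Pᴴ) * A * (P * Pᴴ) = A := by rw [hPP, Matrix.one_mul, Matrix.mul_one]
    calc A = (P * Pᴴ) * A * (P * Pᴴ) := h2.symm
    _ = P * (Pᴴ * A * P) * Pᴴ := by noncomm_ring
  rw [h1, h]

private lemma pow_conj {a : ℕ} (P D A : Matrix (Fin a) (Fin a) ℂ) (hP : Pᴴ * P = 1)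
    (hA : A = P * D * Pᴴ) (i : ℕ) : A ^ i = P * D ^ i * Pᴴ := by
  induction i with
  | zero => rw [pow_zero, pow_zero, Matrix.mul_one, mul_eq_one_comm.mp hP]
  | succ i ih =>
    rw [pow_succ, pow_succ, ih, hA]
    have h : P * D ^ i * Pᴴ * (P * D * Pᴴ) = P * D ^ i * (Pᴴ * P) * D * Pᴴ := by noncomm_ring
    rw [h, hP, Matrix.mul_one, Matrix.mul_assoc P (D ^ i) D]

private lemma frobNorm_transpose' {a b : ℕ} (M : Matrix (Fin a) (Fin b) ℂ) :
    frobNorm Mᵀ = frobNorm M := by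
  unfold frobNorm
  congr 1
  rw [Finset.sum_comm]
  exact Finset.sum_congr rfl fun x _ => Finset.sum_congr rfl fun y _ => by
    rw [Matrix.transpose_apply]

private lemma frobNorm_left {a b c : ℕ} (W : Matrix (Fin a) (Fin b) ℂ) (hW : Wᴴ * W = 1)
    (M : Matrix (Fin b) (Fin c) ℂ) : frobNorm (W * M) = frobNorm M := by
  unfold frobNorm
  congr 1
  rw [Finset.sum_comm]
  conv_rhs => rw [Finset.sum_comm]
  refine Finset.sum_congr rfl fun y _ => ?_
  have h := nsq_mulVec_eq W hW (fun s => M s y)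
  simpa [mulVec, dotProduct, mul_apply] using h

private lemma frobNorm_sandwich {a b a' b' : ℕ} (W : Matrix (Fin a) (Fin a') ℂ)
    (N : Matrix (Fin b) (Fin b') ℂ) (hW : Wᴴ * W = 1) (hN : Nᴴ * N = 1)
    (M : Matrix (Fin a') (Fin b') ℂ) : frobNorm (W * M * Nᵀ) = frobNorm M := by
  have h1 : frobNorm (W * M * Nᵀ) = frobNorm ((W * M * Nᵀ)ᵀ) := (frobNorm_transpose' _).symm
  rw [h1, Matrix.transpose_mul, Matrix.transpose_transpose, frobNorm_left N hN,
    frobNorm_transpose', frobNorm_left W hW]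

private lemma mul_vecMulVec_mul {a b c e : ℕ} (M : Matrix (Fin a) (Fin b) ℂ)
    (u : Fin b → ℂ) (v : Fin c → ℂ) (N : Matrix (Fin c) (Fin e) ℂ) :
    M * vecMulVec u v * N = vecMulVec (M *ᵥ u) (Nᵀ *ᵥ v) := by
  ext x y
  simp only [mul_apply, vecMulVec_apply, mulVec, dotProduct, transpose_apply,
    Finset.sum_mul, Finset.mul_sum]
  rw [Finset.sum_comm]
  conv_rhs => rw [Finset.sum_comm]
  exact Finset.sum_congr rfl fun s _ => Finset.sum_congr rfl fun t _ => by ring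

private lemma conj_sandwich_vecMulVec {a b a' b' : ℕ} (P : Matrix (Fin a) (Fin a') ℂ)
    (Q : Matrix (Fin b) (Fin b') ℂ) (c : Fin a → ℂ) (d : Fin b → ℂ) :
    Pᴴ * vecMulVec c d * Q.map (starRingEnd ℂ) = vecMulVec (Pᴴ *ᵥ c) (Qᴴ *ᵥ d) := by
  have h : (Q.map (starRingEnd ℂ))ᵀ = Qᴴ := by
    ext i j; simp [conjTranspose_apply]
  rw [mul_vecMulVec_mul, h]

private lemma diag_vecMulVec {a b : ℕ} (lam : Fin a → ℝ) (mu : Fin b → ℝ) (i j : ℕ)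
    (u : Fin a → ℂ) (v : Fin b → ℂ) :
    (Matrix.of fun x y => (lam x : ℂ) ^ i * (mu y : ℂ) ^ j * vecMulVec u v x y) =
      vecMulVec ((diagonal fun x => (lam x : ℂ)) ^ i *ᵥ u)
        ((diagonal fun y => (mu y : ℂ)) ^ j *ᵥ v) := by
  ext x y
  simp only [Matrix.of_apply, vecMulVec_apply, diagonal_pow, mulVec_diagonal, Pi.pow_apply]
  ring

private lemma frob_hadamard_le {a b : ℕ} (g : Fin a → Fin b → ℂ) (u : Fin a → ℂ)
    (v : Fin b → ℂ) (K : ℝ) (hK : 0 ≤ K) (hg : ∀ x y, ‖g x y‖ ≤ K) :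
    frobNorm (Matrix.of fun x y => g x y * vecMulVec u v x y)
      ≤ K * (euclNorm u * euclNorm v) := by
  have hs : (0:ℝ) ≤ ∑ x, ‖u x‖ ^ 2 := Finset.sum_nonneg fun _ _ => sq_nonneg _
  have key : (∑ x, ∑ y, ‖(Matrix.of fun x y => g x y * vecMulVec u v x y) x y‖ ^ 2)
      ≤ K ^ 2 * ((∑ x, ‖u x‖ ^ 2) * (∑ y, ‖v y‖ ^ 2)) := by
    have expand : K ^ 2 * ((∑ x, ‖u x‖ ^ 2) * (∑ y, ‖v y‖ ^ 2))
        = ∑ x, ∑ y, K ^ 2 * (‖u x‖ ^ 2 * ‖v y‖ ^ 2) := by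
      rw [Finset.sum_mul_sum, Finset.mul_sum]
      exact Finset.sum_congr rfl fun x _ => by rw [Finset.mul_sum]
    rw [expand]
    refine Finset.sum_le_sum fun x _ => Finset.sum_le_sum fun y _ => ?_
    simp only [Matrix.of_apply, vecMulVec_apply, norm_mul, mul_pow]
    have h1 : ‖g x y‖ ^ 2 ≤ K ^ 2 := by nlinarith [norm_nonneg (g x y), hg x y]
    have h2 : (0:ℝ) ≤ ‖u x‖ ^ 2 * ‖v y‖ ^ 2 := by positivity
    nlinarith
  calc frobNorm (Matrix.of fun x y => g x y * vecMulVec u v x y)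
      ≤ Real.sqrt (K ^ 2 * ((∑ x, ‖u x‖ ^ 2) * (∑ y, ‖v y‖ ^ 2))) := by
        rw [frobNorm]; exact Real.sqrt_le_sqrt key
    _ = K * (euclNorm u * euclNorm v) := by
        rw [Real.sqrt_mul (sq_nonneg K), Real.sqrt_sq hK, Real.sqrt_mul hs,
          euclNorm, euclNorm]
private lemma mul_cancel_one {a b c : ℕ} {M : Matrix (Fin a) (Fin b) ℂ}
    {N : Matrix (Fin b) (Fin a) ℂ} (h : M * N = 1) (X : Matrix (Fin a) (Fin c) ℂ) :
    M * (N * X) = X := by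
  rw [← Matrix.mul_assoc, h, Matrix.one_mul]

private lemma compressed_eigs_mem {m k : ℕ} (A P : Matrix (Fin m) (Fin m) ℂ)
    (lam : Fin m → ℝ) (hP : Pᴴ * P = 1)
    (hA : Pᴴ * A * P = Matrix.diagonal fun a => (lam a : ℂ))
    (U : Matrix (Fin m) (Fin k) ℂ) (hU : Uᴴ * U = 1)
    (Phat : Matrix (Fin k) (Fin k) ℂ) (gam : Fin k → ℝ) (hPhat : Phatᴴ * Phat = 1)
    (hG : Phatᴴ * (Uᴴ * A * U) * Phat = Matrix.diagonal fun i => (gam i : ℂ))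
    (aA bA : ℝ) (hlam : ∀ a, lam a ∈ Set.Icc aA bA) (i : Fin k) :
    gam i ∈ Set.Icc aA bA := by
  have hPP : P * Pᴴ = 1 := mul_eq_one_comm.mp hP
  have hAeq : A = P * (Matrix.diagonal fun a => (lam a : ℂ)) * Pᴴ := unconj P A _ hPP hA
  set Z : Matrix (Fin m) (Fin k) ℂ := Pᴴ * (U * Phat) with hZ
  have hZZ : Zᴴ * Z = 1 := by
    rw [hZ]
    simp only [conjTranspose_mul, conjTranspose_conjTranspose, Matrix.mul_assoc]
    rw [mul_cancel_one hPP, mul_cancel_one hU, hPhat]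
  have hZDZ : Zᴴ * (Matrix.diagonal fun a => (lam a : ℂ)) * Z
      = Matrix.diagonal fun i => (gam i : ℂ) := by
    rw [← hG, hAeq, hZ]
    simp only [conjTranspose_mul, conjTranspose_conjTranspose, Matrix.mul_assoc]
  have hgam : ((gam i : ℂ))
      = star (fun s => Z s i) ⬝ᵥ ((Matrix.diagonal fun a => (lam a : ℂ)) *ᵥ fun s => Z s i) := by
    rw [← quad_diag_entry, hZDZ, Matrix.diagonal_apply_eq]
  have hone : star (fun s => Z s i) ⬝ᵥ (fun s => Z s i) = 1 := by
    rw [col_dot, hZZ, Matrix.one_apply_eq]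
  have h1 : (∑ s, ‖Z s i‖ ^ 2 : ℝ) = 1 := by
    rw [dot_star_self] at hone
    exact_mod_cast hone
  have h2 : gam i = ∑ s, lam s * ‖Z s i‖ ^ 2 := by
    rw [dot_diag] at hgam
    exact_mod_cast hgam
  constructor
  · calc aA = aA * ∑ s, ‖Z s i‖ ^ 2 := by rw [h1, mul_one]
    _ = ∑ s, aA * ‖Z s i‖ ^ 2 := Finset.mul_sum _ _ _
    _ ≤ ∑ s, lam s * ‖Z s i‖ ^ 2 :=
      Finset.sum_le_sum fun s _ => mul_le_mul_of_nonneg_right (hlam s).1 (sq_nonneg _)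
    _ = gam i := h2.symm
  · calc gam i = ∑ s, lam s * ‖Z s i‖ ^ 2 := h2
    _ ≤ ∑ s, bA * ‖Z s i‖ ^ 2 :=
      Finset.sum_le_sum fun s _ => mul_le_mul_of_nonneg_right (hlam s).2 (sq_nonneg _)
    _ = bA * ∑ s, ‖Z s i‖ ^ 2 := (Finset.mul_sum _ _ _).symm
    _ = bA := by rw [h1, mul_one]

private lemma krylov_exact {m k : ℕ} (A : Matrix (Fin m) (Fin m) ℂ) (c : Fin m → ℂ)
    (U : Matrix (Fin m) (Fin k) ℂ) (hU : Uᴴ * U = 1)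
    (hspan : Submodule.span ℂ {v : Fin m → ℂ | ∃ i < k, v = (A ^ i) *ᵥ c} =
      Submodule.span ℂ (Set.range fun j : Fin k => fun a => U a j)) :
    ∀ i, i < k → U *ᵥ ((Uᴴ * A * U) ^ i *ᵥ (Uᴴ *ᵥ c)) = A ^ i *ᵥ c := by
  have hproj : ∀ v ∈ Submodule.span ℂ (Set.range fun j : Fin k => fun a => U a j),
      U *ᵥ (Uᴴ *ᵥ v) = v := by
    intro v hv
    induction hv using Submodule.span_induction with
    | mem v hv =>
      obtain ⟨j, rfl⟩ := hv
      have h1 : Uᴴ *ᵥ (fun a => U a j) = fun i => (Uᴴ * U) i j := by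
        ext i'; simp [mulVec, dotProduct, mul_apply]
      rw [h1, hU]
      ext x; simp [mulVec, dotProduct, Matrix.one_apply]
    | zero => simp [Matrix.mulVec_zero]
    | add u v hu hv ihu ihv => simp [Matrix.mulVec_add, ihu, ihv]
    | smul a u hu ih => simp [Matrix.mulVec_smul, ih]
  have hmem : ∀ i, i < k → (A ^ i *ᵥ c) ∈
      Submodule.span ℂ (Set.range fun j : Fin k => fun a => U a j) := by
    intro i hi
    rw [← hspan]
    exact Submodule.subset_span ⟨i, hi, rfl⟩
  intro i
  induction i with
  | zero =>
    intro hi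
    have h0 := hproj c (by simpa using hmem 0 hi)
    simpa using h0
  | succ i ih =>
    intro hi
    have hik : i < k := Nat.lt_of_succ_lt hi
    have hstep : (Uᴴ * A * U) ^ (i + 1) *ᵥ (Uᴴ *ᵥ c) = Uᴴ *ᵥ (A ^ (i + 1) *ᵥ c) := by
      calc (Uᴴ * A * U) ^ (i + 1) *ᵥ (Uᴴ *ᵥ c)
          = ((Uᴴ * A * U) * (Uᴴ * A * U) ^ i) *ᵥ (Uᴴ *ᵥ c) := by rw [pow_succ']
        _ = (Uᴴ * A * U) *ᵥ ((Uᴴ * A * U) ^ i *ᵥ (Uᴴ *ᵥ c)) :=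
            (mulVec_mulVec (Uᴴ *ᵥ c) (Uᴴ * A * U) ((Uᴴ * A * U) ^ i)).symm
        _ = (Uᴴ * A) *ᵥ (U *ᵥ ((Uᴴ * A * U) ^ i *ᵥ (Uᴴ *ᵥ c))) :=
            (mulVec_mulVec _ (Uᴴ * A) U).symm
        _ = (Uᴴ * A) *ᵥ (A ^ i *ᵥ c) := by rw [ih hik]
        _ = Uᴴ *ᵥ (A *ᵥ (A ^ i *ᵥ c)) := (mulVec_mulVec _ Uᴴ A).symm
        _ = Uᴴ *ᵥ ((A * A ^ i) *ᵥ c) := congrArg (fun z => Uᴴ *ᵥ z) (mulVec_mulVec c A (A ^ i))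
        _ = Uᴴ *ᵥ (A ^ (i + 1) *ᵥ c) := by rw [← pow_succ']
    rw [hstep]
    exact hproj _ (hmem (i + 1) hi)
end Aux

/-- Convergence bound (Hermitian case, constant M = 1) for the tensorized Krylov method:
with `A = P diag(λ) Pᴴ`, `B = Q diag(μ) Qᴴ` Hermitian, `U`, `V` orthonormal bases of the
Krylov subspaces `K_k(A,c)`, `K_ℓ(B,d)` (of full dimension), `G = Uᴴ A U = P̂ diag(γ) P̂ᴴ`,
`H = Vᴴ B V = Q̂ diag(η) Q̂ᴴ`, all `λ_a ∈ [a_A, b_A]`, all `μ_b ∈ [a_B, b_B]`,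
`X_f = P ((f(λ_a,μ_b))_{a,b} ∘ (Pᴴ (cdᵀ) Q̄)) Qᵀ` and
`Y_f = P̂ ((f(γ_i,η_j))_{i,j} ∘ (P̂ᴴ (Uᴴc)(Vᴴd)ᵀ Q̂̄)) Q̂ᵀ`, one has, for every bivariate
polynomial `p` of bidegree at most `(k-1, ℓ-1)` and every uniform bound `K` on
`|f - p|` over `[a_A,b_A] × [a_B,b_B]`:
`‖X_f − U Y_f Vᵀ‖_F ≤ 2 ‖c‖₂ ‖d‖₂ K`. -/
theorem tensorized_krylov_convergence_hermitian {m n k l : ℕ}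
    (A P : Matrix (Fin m) (Fin m) ℂ) (B Q : Matrix (Fin n) (Fin n) ℂ)
    (lam : Fin m → ℝ) (mu : Fin n → ℝ)
    (hP : Pᴴ * P = 1) (hQ : Qᴴ * Q = 1)
    (hA : Pᴴ * A * P = Matrix.diagonal fun a => (lam a : ℂ))
    (hB : Qᴴ * B * Q = Matrix.diagonal fun b => (mu b : ℂ))
    (c : Fin m → ℂ) (d : Fin n → ℂ)
    (U : Matrix (Fin m) (Fin k) ℂ) (V : Matrix (Fin n) (Fin l) ℂ)
    (hU : Uᴴ * U = 1) (hV : Vᴴ * V = 1)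
    (hspanU : Submodule.span ℂ {v : Fin m → ℂ | ∃ i < k, v = (A ^ i) *ᵥ c} =
      Submodule.span ℂ (Set.range fun j : Fin k => fun a => U a j))
    (hdimU : Module.finrank ℂ
      (Submodule.span ℂ {v : Fin m → ℂ | ∃ i < k, v = (A ^ i) *ᵥ c}) = k)
    (hspanV : Submodule.span ℂ {v : Fin n → ℂ | ∃ j < l, v = (B ^ j) *ᵥ d} =
      Submodule.span ℂ (Set.range fun j : Fin l => fun b => V b j))
    (hdimV : Module.finrank ℂ
      (Submodule.span ℂ {v : Fin n → ℂ | ∃ j < l, v = (B ^ j) *ᵥ d}) = l)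
    (Phat : Matrix (Fin k) (Fin k) ℂ) (Qhat : Matrix (Fin l) (Fin l) ℂ)
    (gam : Fin k → ℝ) (eta : Fin l → ℝ)
    (hPhat : Phatᴴ * Phat = 1) (hQhat : Qhatᴴ * Qhat = 1)
    (hG : Phatᴴ * (Uᴴ * A * U) * Phat = Matrix.diagonal fun i => (gam i : ℂ))
    (hH : Qhatᴴ * (Vᴴ * B * V) * Qhat = Matrix.diagonal fun j => (eta j : ℂ))
    (aA bA aB bB : ℝ)
    (hlam : ∀ a, lam a ∈ Set.Icc aA bA) (hmu : ∀ b, mu b ∈ Set.Icc aB bB)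
    (f : ℝ → ℝ → ℂ) :
    ∀ p : Fin k → Fin l → ℂ, ∀ K : ℝ,
      (∀ x ∈ Set.Icc aA bA, ∀ y ∈ Set.Icc aB bB,
        ‖f x y - ∑ i : Fin k, ∑ j : Fin l,
          p i j * (x : ℂ) ^ (i : ℕ) * (y : ℂ) ^ (j : ℕ)‖ ≤ K) →
      frobNorm
        (P * (Matrix.of fun a b =>
            f (lam a) (mu b) * (Pᴴ * vecMulVec c d * Q.map (starRingEnd ℂ)) a b) * Qᵀ
          - U * (Phat * (Matrix.of fun i j =>
              f (gam i) (eta j) *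
                (Phatᴴ * vecMulVec (Uᴴ *ᵥ c) (Vᴴ *ᵥ d) * Qhat.map (starRingEnd ℂ)) i j)
            * Qhatᵀ) * Vᵀ)
        ≤ 2 * euclNorm c * euclNorm d * K := by
  intro p K hKbd
  rcases Nat.eq_zero_or_pos m with hm | hm
  · subst hm
    simp [frobNorm, euclNorm]
  rcases Nat.eq_zero_or_pos n with hn | hn
  · subst hn
    simp [frobNorm, euclNorm]
  have hKnn : 0 ≤ K :=
    le_trans (norm_nonneg _) (hKbd (lam ⟨0, hm⟩) (hlam ⟨0, hm⟩) (mu ⟨0, hn⟩) (hmu ⟨0, hn⟩))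
  have hPP : P * Pᴴ = 1 := mul_eq_one_comm.mp hP
  have hQQ : Q * Qᴴ = 1 := mul_eq_one_comm.mp hQ
  have hPhPh : Phat * Phatᴴ = 1 := mul_eq_one_comm.mp hPhat
  have hQhQh : Qhat * Qhatᴴ = 1 := mul_eq_one_comm.mp hQhat
  have hAeq : A = P * (Matrix.diagonal fun a => (lam a : ℂ)) * Pᴴ := unconj P A _ hPP hA
  have hBeq : B = Q * (Matrix.diagonal fun b => (mu b : ℂ)) * Qᴴ := unconj Q B _ hQQ hB
  have hApow := pow_conj P (Matrix.diagonal fun a => (lam a : ℂ)) A hP hAeq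
  have hBpow := pow_conj Q (Matrix.diagonal fun b => (mu b : ℂ)) B hQ hBeq
  have hGeq : Uᴴ * A * U = Phat * (Matrix.diagonal fun i => (gam i : ℂ)) * Phatᴴ :=
    unconj Phat _ _ hPhPh hG
  have hHeq : Vᴴ * B * V = Qhat * (Matrix.diagonal fun j => (eta j : ℂ)) * Qhatᴴ :=
    unconj Qhat _ _ hQhQh hH
  have hGpow := pow_conj Phat (Matrix.diagonal fun i => (gam i : ℂ)) _ hPhat hGeq
  have hHpow := pow_conj Qhat (Matrix.diagonal fun j => (eta j : ℂ)) _ hQhat hHeq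
  have hexU := krylov_exact A c U hU hspanU
  have hexV := krylov_exact B d V hV hspanV
  have hgams : ∀ i, gam i ∈ Set.Icc aA bA := fun i =>
    compressed_eigs_mem A P lam hP hA U hU Phat gam hPhat hG aA bA hlam i
  have hetas : ∀ j, eta j ∈ Set.Icc aB bB := fun j =>
    compressed_eigs_mem B Q mu hQ hB V hV Qhat eta hQhat hH aB bB hmu j
  -- per-monomial identities
  have hterm1 : ∀ (i : Fin k) (j : Fin l),
      P * (Matrix.of fun a b => (lam a : ℂ) ^ (i : ℕ) * (mu b : ℂ) ^ (j : ℕ) *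
          (Pᴴ * vecMulVec c d * Q.map (starRingEnd ℂ)) a b) * Qᵀ
        = vecMulVec (A ^ (i : ℕ) *ᵥ c) (B ^ (j : ℕ) *ᵥ d) := by
    intro i j
    rw [conj_sandwich_vecMulVec, diag_vecMulVec, mul_vecMulVec_mul, transpose_transpose]
    have h1 : P *ᵥ ((Matrix.diagonal fun a => (lam a : ℂ)) ^ (i : ℕ) *ᵥ (Pᴴ *ᵥ c))
        = A ^ (i : ℕ) *ᵥ c := by
      calc P *ᵥ ((Matrix.diagonal fun a => (lam a : ℂ)) ^ (i : ℕ) *ᵥ (Pᴴ *ᵥ c))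
          = (P * (Matrix.diagonal fun a => (lam a : ℂ)) ^ (i : ℕ)) *ᵥ (Pᴴ *ᵥ c) :=
            mulVec_mulVec _ P _
        _ = ((P * (Matrix.diagonal fun a => (lam a : ℂ)) ^ (i : ℕ)) * Pᴴ) *ᵥ c :=
            mulVec_mulVec _ _ Pᴴ
        _ = A ^ (i : ℕ) *ᵥ c := by rw [← hApow]
    have h2 : Q *ᵥ ((Matrix.diagonal fun b => (mu b : ℂ)) ^ (j : ℕ) *ᵥ (Qᴴ *ᵥ d))
        = B ^ (j : ℕ) *ᵥ d := by
      calc Q *ᵥ ((Matrix.diagonal fun b => (mu b : ℂ)) ^ (j : ℕ) *ᵥ (Qᴴ *ᵥ d))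
          = (Q * (Matrix.diagonal fun b => (mu b : ℂ)) ^ (j : ℕ)) *ᵥ (Qᴴ *ᵥ d) :=
            mulVec_mulVec _ Q _
        _ = ((Q * (Matrix.diagonal fun b => (mu b : ℂ)) ^ (j : ℕ)) * Qᴴ) *ᵥ d :=
            mulVec_mulVec _ _ Qᴴ
        _ = B ^ (j : ℕ) *ᵥ d := by rw [← hBpow]
    rw [h1, h2]
  have hterm2 : ∀ (i : Fin k) (j : Fin l),
      U * (Phat * (Matrix.of fun x y => (gam x : ℂ) ^ (i : ℕ) * (eta y : ℂ) ^ (j : ℕ) *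
          (Phatᴴ * vecMulVec (Uᴴ *ᵥ c) (Vᴴ *ᵥ d) * Qhat.map (starRingEnd ℂ)) x y) * Qhatᵀ) * Vᵀ
        = vecMulVec (A ^ (i : ℕ) *ᵥ c) (B ^ (j : ℕ) *ᵥ d) := by
    intro i j
    rw [conj_sandwich_vecMulVec, diag_vecMulVec, mul_vecMulVec_mul, transpose_transpose,
      mul_vecMulVec_mul, transpose_transpose]
    have h1 : U *ᵥ (Phat *ᵥ ((Matrix.diagonal fun x => (gam x : ℂ)) ^ (i : ℕ) *ᵥ
        (Phatᴴ *ᵥ (Uᴴ *ᵥ c)))) = A ^ (i : ℕ) *ᵥ c := by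
      have hcol : Phat *ᵥ ((Matrix.diagonal fun x => (gam x : ℂ)) ^ (i : ℕ) *ᵥ
          (Phatᴴ *ᵥ (Uᴴ *ᵥ c))) = (Uᴴ * A * U) ^ (i : ℕ) *ᵥ (Uᴴ *ᵥ c) := by
        calc Phat *ᵥ ((Matrix.diagonal fun x => (gam x : ℂ)) ^ (i : ℕ) *ᵥ (Phatᴴ *ᵥ (Uᴴ *ᵥ c)))
            = (Phat * (Matrix.diagonal fun x => (gam x : ℂ)) ^ (i : ℕ)) *ᵥ
              (Phatᴴ *ᵥ (Uᴴ *ᵥ c)) := mulVec_mulVec _ Phat _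
          _ = ((Phat * (Matrix.diagonal fun x => (gam x : ℂ)) ^ (i : ℕ)) * Phatᴴ) *ᵥ
              (Uᴴ *ᵥ c) := mulVec_mulVec _ _ Phatᴴ
          _ = (Uᴴ * A * U) ^ (i : ℕ) *ᵥ (Uᴴ *ᵥ c) := by rw [← hGpow]
      rw [hcol]
      exact hexU (i : ℕ) i.isLt
    have h2 : V *ᵥ (Qhat *ᵥ ((Matrix.diagonal fun y => (eta y : ℂ)) ^ (j : ℕ) *ᵥ
        (Qhatᴴ *ᵥ (Vᴴ *ᵥ d)))) = B ^ (j : ℕ) *ᵥ d := by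
      have hcol : Qhat *ᵥ ((Matrix.diagonal fun y => (eta y : ℂ)) ^ (j : ℕ) *ᵥ
          (Qhatᴴ *ᵥ (Vᴴ *ᵥ d))) = (Vᴴ * B * V) ^ (j : ℕ) *ᵥ (Vᴴ *ᵥ d) := by
        calc Qhat *ᵥ ((Matrix.diagonal fun y => (eta y : ℂ)) ^ (j : ℕ) *ᵥ (Qhatᴴ *ᵥ (Vᴴ *ᵥ d)))
            = (Qhat * (Matrix.diagonal fun y => (eta y : ℂ)) ^ (j : ℕ)) *ᵥ
              (Qhatᴴ *ᵥ (Vᴴ *ᵥ d)) := mulVec_mulVec _ Qhat _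
          _ = ((Qhat * (Matrix.diagonal fun y => (eta y : ℂ)) ^ (j : ℕ)) * Qhatᴴ) *ᵥ
              (Vᴴ *ᵥ d) := mulVec_mulVec _ _ Qhatᴴ
          _ = (Vᴴ * B * V) ^ (j : ℕ) *ᵥ (Vᴴ *ᵥ d) := by rw [← hHpow]
      rw [hcol]
      exact hexV (j : ℕ) j.isLt
    rw [h1, h2]
  -- polynomial matrices equal the common sum
  have hXp : P * (Matrix.of fun a b =>
        (∑ i : Fin k, ∑ j : Fin l, p i j * (lam a : ℂ) ^ (i : ℕ) * (mu b : ℂ) ^ (j : ℕ)) *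
        (Pᴴ * vecMulVec c d * Q.map (starRingEnd ℂ)) a b) * Qᵀ
      = ∑ i : Fin k, ∑ j : Fin l, p i j • vecMulVec (A ^ (i : ℕ) *ᵥ c) (B ^ (j : ℕ) *ᵥ d) := by
    have hsplit : (Matrix.of fun a b =>
        (∑ i : Fin k, ∑ j : Fin l, p i j * (lam a : ℂ) ^ (i : ℕ) * (mu b : ℂ) ^ (j : ℕ)) *
        (Pᴴ * vecMulVec c d * Q.map (starRingEnd ℂ)) a b)
        = ∑ i : Fin k, ∑ j : Fin l, p i j • Matrix.of fun a b =>
            (lam a : ℂ) ^ (i : ℕ) * (mu b : ℂ) ^ (j : ℕ) *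
            (Pᴴ * vecMulVec c d * Q.map (starRingEnd ℂ)) a b := by
      ext a b
      simp only [Matrix.of_apply, Matrix.sum_apply, Matrix.smul_apply, smul_eq_mul,
        Finset.sum_mul]
      exact Finset.sum_congr rfl fun i _ => Finset.sum_congr rfl fun j _ => by ring
    rw [hsplit]
    simp only [Matrix.mul_sum, Matrix.sum_mul, Matrix.mul_smul, Matrix.smul_mul]
    exact Finset.sum_congr rfl fun i _ => Finset.sum_congr rfl fun j _ => by rw [hterm1 i j]
  have hYp : U * (Phat * (Matrix.of fun x y =>
        (∑ i : Fin k, ∑ j : Fin l, p i j * (gam x : ℂ) ^ (i : ℕ) * (eta y : ℂ) ^ (j : ℕ)) *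
        (Phatᴴ * vecMulVec (Uᴴ *ᵥ c) (Vᴴ *ᵥ d) * Qhat.map (starRingEnd ℂ)) x y) * Qhatᵀ) * Vᵀ
      = ∑ i : Fin k, ∑ j : Fin l, p i j • vecMulVec (A ^ (i : ℕ) *ᵥ c) (B ^ (j : ℕ) *ᵥ d) := by
    have hsplit : (Matrix.of fun x y =>
        (∑ i : Fin k, ∑ j : Fin l, p i j * (gam x : ℂ) ^ (i : ℕ) * (eta y : ℂ) ^ (j : ℕ)) *
        (Phatᴴ * vecMulVec (Uᴴ *ᵥ c) (Vᴴ *ᵥ d) * Qhat.map (starRingEnd ℂ)) x y)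
        = ∑ i : Fin k, ∑ j : Fin l, p i j • Matrix.of fun x y =>
            (gam x : ℂ) ^ (i : ℕ) * (eta y : ℂ) ^ (j : ℕ) *
            (Phatᴴ * vecMulVec (Uᴴ *ᵥ c) (Vᴴ *ᵥ d) * Qhat.map (starRingEnd ℂ)) x y := by
      ext x y
      simp only [Matrix.of_apply, Matrix.sum_apply, Matrix.smul_apply, smul_eq_mul,
        Finset.sum_mul]
      exact Finset.sum_congr rfl fun i _ => Finset.sum_congr rfl fun j _ => by ring
    rw [hsplit]
    simp only [Matrix.mul_sum, Matrix.sum_mul, Matrix.mul_smul, Matrix.smul_mul]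
    exact Finset.sum_congr rfl fun i _ => Finset.sum_congr rfl fun j _ => by rw [hterm2 i j]
  -- split off the polynomial part
  have hsplitF1 : (Matrix.of fun a b =>
        f (lam a) (mu b) * (Pᴴ * vecMulVec c d * Q.map (starRingEnd ℂ)) a b)
      = (Matrix.of fun a b =>
          (f (lam a) (mu b) - ∑ i : Fin k, ∑ j : Fin l,
            p i j * (lam a : ℂ) ^ (i : ℕ) * (mu b : ℂ) ^ (j : ℕ)) *
          vecMulVec (Pᴴ *ᵥ c) (Qᴴ *ᵥ d) a b)
        + (Matrix.of fun a b =>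
            (∑ i : Fin k, ∑ j : Fin l, p i j * (lam a : ℂ) ^ (i : ℕ) * (mu b : ℂ) ^ (j : ℕ)) *
            (Pᴴ * vecMulVec c d * Q.map (starRingEnd ℂ)) a b) := by
    rw [conj_sandwich_vecMulVec]
    ext a b
    simp only [Matrix.of_apply, Matrix.add_apply]
    ring
  have hsplitF2 : (Matrix.of fun x y =>
        f (gam x) (eta y) *
          (Phatᴴ * vecMulVec (Uᴴ *ᵥ c) (Vᴴ *ᵥ d) * Qhat.map (starRingEnd ℂ)) x y)
      = (Matrix.of fun x y =>
          (f (gam x) (eta y) - ∑ i : Fin k, ∑ j : Fin l,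
            p i j * (gam x : ℂ) ^ (i : ℕ) * (eta y : ℂ) ^ (j : ℕ)) *
          vecMulVec (Phatᴴ *ᵥ (Uᴴ *ᵥ c)) (Qhatᴴ *ᵥ (Vᴴ *ᵥ d)) x y)
        + (Matrix.of fun x y =>
            (∑ i : Fin k, ∑ j : Fin l, p i j * (gam x : ℂ) ^ (i : ℕ) * (eta y : ℂ) ^ (j : ℕ)) *
            (Phatᴴ * vecMulVec (Uᴴ *ᵥ c) (Vᴴ *ᵥ d) * Qhat.map (starRingEnd ℂ)) x y) := by
    rw [conj_sandwich_vecMulVec]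
    ext x y
    simp only [Matrix.of_apply, Matrix.add_apply]
    ring
  rw [hsplitF1, hsplitF2]
  simp only [Matrix.mul_add, Matrix.add_mul]
  rw [hXp, hYp]
  have habel : ∀ (X S Y : Matrix (Fin m) (Fin n) ℂ), X + S - (Y + S) = X - Y := by
    intro X S Y; abel
  rw [habel]
  -- now bound the two error terms
  have hb1 : frobNorm (P * (Matrix.of fun a b =>
      (f (lam a) (mu b) - ∑ i : Fin k, ∑ j : Fin l,
        p i j * (lam a : ℂ) ^ (i : ℕ) * (mu b : ℂ) ^ (j : ℕ)) *
      vecMulVec (Pᴴ *ᵥ c) (Qᴴ *ᵥ d) a b) * Qᵀ)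
      ≤ K * (euclNorm (Pᴴ *ᵥ c) * euclNorm (Qᴴ *ᵥ d)) := by
    rw [frobNorm_sandwich P Q hP hQ]
    exact frob_hadamard_le _ _ _ K hKnn fun a b => hKbd (lam a) (hlam a) (mu b) (hmu b)
  have hb2 : frobNorm (U * (Phat * (Matrix.of fun x y =>
      (f (gam x) (eta y) - ∑ i : Fin k, ∑ j : Fin l,
        p i j * (gam x : ℂ) ^ (i : ℕ) * (eta y : ℂ) ^ (j : ℕ)) *
      vecMulVec (Phatᴴ *ᵥ (Uᴴ *ᵥ c)) (Qhatᴴ *ᵥ (Vᴴ *ᵥ d)) x y) * Qhatᵀ) * Vᵀ)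
      ≤ K * (euclNorm (Phatᴴ *ᵥ (Uᴴ *ᵥ c)) * euclNorm (Qhatᴴ *ᵥ (Vᴴ *ᵥ d))) := by
    rw [frobNorm_sandwich U V hU hV, frobNorm_sandwich Phat Qhat hPhat hQhat]
    exact frob_hadamard_le _ _ _ K hKnn fun x y => hKbd (gam x) (hgams x) (eta y) (hetas y)
  have e1 : euclNorm (Pᴴ *ᵥ c) = euclNorm c :=
    euclNorm_mulVec_eq Pᴴ (by rw [conjTranspose_conjTranspose]; exact hPP) c
  have e2 : euclNorm (Qᴴ *ᵥ d) = euclNorm d :=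
    euclNorm_mulVec_eq Qᴴ (by rw [conjTranspose_conjTranspose]; exact hQQ) d
  have e3 : euclNorm (Phatᴴ *ᵥ (Uᴴ *ᵥ c)) = euclNorm (Uᴴ *ᵥ c) :=
    euclNorm_mulVec_eq Phatᴴ (by rw [conjTranspose_conjTranspose]; exact hPhPh) _
  have e4 : euclNorm (Qhatᴴ *ᵥ (Vᴴ *ᵥ d)) = euclNorm (Vᴴ *ᵥ d) :=
    euclNorm_mulVec_eq Qhatᴴ (by rw [conjTranspose_conjTranspose]; exact hQhQh) _
  have le1 : euclNorm (Uᴴ *ᵥ c) ≤ euclNorm c := by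
    unfold euclNorm; exact Real.sqrt_le_sqrt (nsq_proj_le U hU c)
  have le2 : euclNorm (Vᴴ *ᵥ d) ≤ euclNorm d := by
    unfold euclNorm; exact Real.sqrt_le_sqrt (nsq_proj_le V hV d)
  have nn1 : 0 ≤ euclNorm (Uᴴ *ᵥ c) := by unfold euclNorm; exact Real.sqrt_nonneg _
  have nn2 : 0 ≤ euclNorm (Vᴴ *ᵥ d) := by unfold euclNorm; exact Real.sqrt_nonneg _
  have nnc : 0 ≤ euclNorm c := by unfold euclNorm; exact Real.sqrt_nonneg _
  have nnd : 0 ≤ euclNorm d := by unfold euclNorm; exact Real.sqrt_nonneg _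
  have hmul : euclNorm (Uᴴ *ᵥ c) * euclNorm (Vᴴ *ᵥ d) ≤ euclNorm c * euclNorm d :=
    mul_le_mul le1 le2 nn2 nnc
  calc frobNorm (P * (Matrix.of fun a b =>
      (f (lam a) (mu b) - ∑ i : Fin k, ∑ j : Fin l,
        p i j * (lam a : ℂ) ^ (i : ℕ) * (mu b : ℂ) ^ (j : ℕ)) *
      vecMulVec (Pᴴ *ᵥ c) (Qᴴ *ᵥ d) a b) * Qᵀ
      - U * (Phat * (Matrix.of fun x y =>
      (f (gam x) (eta y) - ∑ i : Fin k, ∑ j : Fin l,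
        p i j * (gam x : ℂ) ^ (i : ℕ) * (eta y : ℂ) ^ (j : ℕ)) *
      vecMulVec (Phatᴴ *ᵥ (Uᴴ *ᵥ c)) (Qhatᴴ *ᵥ (Vᴴ *ᵥ d)) x y) * Qhatᵀ) * Vᵀ)
      ≤ frobNorm (P * (Matrix.of fun a b =>
          (f (lam a) (mu b) - ∑ i : Fin k, ∑ j : Fin l,
            p i j * (lam a : ℂ) ^ (i : ℕ) * (mu b : ℂ) ^ (j : ℕ)) *
          vecMulVec (Pᴴ *ᵥ c) (Qᴴ *ᵥ d) a b) * Qᵀ)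
        + frobNorm (U * (Phat * (Matrix.of fun x y =>
          (f (gam x) (eta y) - ∑ i : Fin k, ∑ j : Fin l,
            p i j * (gam x : ℂ) ^ (i : ℕ) * (eta y : ℂ) ^ (j : ℕ)) *
          vecMulVec (Phatᴴ *ᵥ (Uᴴ *ᵥ c)) (Qhatᴴ *ᵥ (Vᴴ *ᵥ d)) x y) * Qhatᵀ) * Vᵀ) :=
      frobNorm_sub_le _ _
    _ ≤ K * (euclNorm (Pᴴ *ᵥ c) * euclNorm (Qᴴ *ᵥ d))
        + K * (euclNorm (Phatᴴ *ᵥ (Uᴴ *ᵥ c)) * euclNorm (Qhatᴴ *ᵥ (Vᴴ *ᵥ d))) :=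
      add_le_add hb1 hb2
    _ ≤ 2 * euclNorm c * euclNorm d * K := by
      rw [e1, e2, e3, e4]
      nlinarith [mul_le_mul_of_nonneg_left hmul hKnn]
end

section
/- Let A ∈ ℂ^{m×m} and B ∈ ℂ^{n×n} be Hermitian, with unitary P, Q and real eigenvalues such that P* A P = diag(λ_1,...,λ_m) and Q* B Q = diag(μ_1,...,μ_n). Let p(x,y) = Σ_{i=0}^{k} Σ_{j=0}^{ℓ} p_{ij} x^i y^j be a bivariate polynomial with p(λ_a, μ_b) ≠ 0 for all a, b. Then for every C ∈ ℂ^{m×n}, the matrix X = P ( ( p(λ_a, μ_b)^{-1} )_{a,b} ∘ (P* C Q̄) ) Q^T satisfies the linear matrix equation Σ_{i=0}^{k} Σ_{j=0}^{ℓ} p_{ij} A^i X (B^T)^j = C. -/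
open Matrix

private lemma sandwich_pow {N : ℕ} (U D V : Matrix (Fin N) (Fin N) ℂ)
    (h1 : U * V = 1) (h2 : V * U = 1) (i : ℕ) :
    (U * D * V) ^ i = U * D ^ i * V := by
  induction i with
  | zero => simp [h1]
  | succ i ih =>
      rw [pow_succ, ih, pow_succ]
      calc U * D ^ i * V * (U * D * V) = U * D ^ i * ((V * U) * (D * V)) := by
            simp only [Matrix.mul_assoc]
        _ = U * D ^ i * (D * V) := by rw [h2, Matrix.one_mul]
        _ = U * (D ^ i * D) * V := by simp only [Matrix.mul_assoc]

/-- The instance `f(x,y) = 1/p(x,y)`: for Hermitian `A = P diag(λ) Pᴴ` and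
`B = Q diag(μ) Qᴴ` and a bivariate polynomial `p` with `p(λ_a, μ_b) ≠ 0` for all `a, b`,
the matrix `X = P ((p(λ_a, μ_b)⁻¹)_{a,b} ∘ (Pᴴ C Q̄)) Qᵀ` solves the linear matrix
equation `Σᵢⱼ pᵢⱼ Aⁱ X (Bᵀ)ʲ = C`. -/
theorem polynomial_matrix_equation_solution_hermitian {m n k l : ℕ}
    (A P : Matrix (Fin m) (Fin m) ℂ) (B Q : Matrix (Fin n) (Fin n) ℂ)
    (lam : Fin m → ℝ) (mu : Fin n → ℝ)
    (hP : Pᴴ * P = 1) (hQ : Qᴴ * Q = 1)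
    (hA : Pᴴ * A * P = Matrix.diagonal fun a => (lam a : ℂ))
    (hB : Qᴴ * B * Q = Matrix.diagonal fun b => (mu b : ℂ))
    (p : Fin (k + 1) → Fin (l + 1) → ℂ)
    (hne : ∀ a b, (∑ i : Fin (k + 1), ∑ j : Fin (l + 1),
      p i j * (lam a : ℂ) ^ (i : ℕ) * (mu b : ℂ) ^ (j : ℕ)) ≠ 0)
    (C : Matrix (Fin m) (Fin n) ℂ) :
    ∑ i : Fin (k + 1), ∑ j : Fin (l + 1),
      p i j • (A ^ (i : ℕ) *
        (P * (Matrix.of fun a b =>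
          (∑ i' : Fin (k + 1), ∑ j' : Fin (l + 1),
            p i' j' * (lam a : ℂ) ^ (i' : ℕ) * (mu b : ℂ) ^ (j' : ℕ))⁻¹ *
          (Pᴴ * C * Q.map (starRingEnd ℂ)) a b) * Qᵀ)
        * Bᵀ ^ (j : ℕ)) = C := by
  have hP' : P * Pᴴ = 1 := mul_eq_one_comm.mp hP
  have hQ' : Q * Qᴴ = 1 := mul_eq_one_comm.mp hQ
  set Dl : Matrix (Fin m) (Fin m) ℂ := Matrix.diagonal fun a => (lam a : ℂ)
  set Dm : Matrix (Fin n) (Fin n) ℂ := Matrix.diagonal fun b => (mu b : ℂ)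
  set Qc : Matrix (Fin n) (Fin n) ℂ := Q.map (starRingEnd ℂ) with hQc
  have hQcT : Qc = (Qᴴ)ᵀ := by
    ext a b; simp [hQc, Matrix.conjTranspose_apply]
  have hqc1 : Qc * Qᵀ = 1 := by
    rw [hQcT, ← Matrix.transpose_mul, hQ', Matrix.transpose_one]
  have hqc2 : Qᵀ * Qc = 1 := by
    rw [hQcT, ← Matrix.transpose_mul, hQ, Matrix.transpose_one]
  have hAeq : A = P * Dl * Pᴴ := by
    calc A = (P * Pᴴ) * A * (P * Pᴴ) := by rw [hP']; simp
      _ = P * (Pᴴ * A * P) * Pᴴ := by simp only [Matrix.mul_assoc]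
      _ = P * Dl * Pᴴ := by rw [hA]
  have hBeq : Bᵀ = Qc * Dm * Qᵀ := by
    have hB' : B = Q * Dm * Qᴴ := by
      calc B = (Q * Qᴴ) * B * (Q * Qᴴ) := by rw [hQ']; simp
        _ = Q * (Qᴴ * B * Q) * Qᴴ := by simp only [Matrix.mul_assoc]
        _ = Q * Dm * Qᴴ := by rw [hB]
    rw [hB', Matrix.transpose_mul, Matrix.transpose_mul, hQcT]
    simp [Dm, Matrix.diagonal_transpose, Matrix.mul_assoc]
  have hApow : ∀ i : ℕ, A ^ i = P * Dl ^ i * Pᴴ := fun i => by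
    rw [hAeq, sandwich_pow _ _ _ hP' hP]
  have hBpow : ∀ j : ℕ, Bᵀ ^ j = Qc * Dm ^ j * Qᵀ := fun j => by
    rw [hBeq, sandwich_pow _ _ _ hqc1 hqc2]
  set M : Matrix (Fin m) (Fin n) ℂ := Matrix.of fun a b =>
      (∑ i' : Fin (k + 1), ∑ j' : Fin (l + 1),
        p i' j' * (lam a : ℂ) ^ (i' : ℕ) * (mu b : ℂ) ^ (j' : ℕ))⁻¹ *
      (Pᴴ * C * Qc) a b with hM
  have hterm : ∀ (i : Fin (k+1)) (j : Fin (l+1)),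
      A ^ (i:ℕ) * (P * M * Qᵀ) * Bᵀ ^ (j:ℕ) = P * (Dl ^ (i:ℕ) * M * Dm ^ (j:ℕ)) * Qᵀ := by
    intro i j
    rw [hApow, hBpow]
    calc P * Dl ^ (i:ℕ) * Pᴴ * (P * M * Qᵀ) * (Qc * Dm ^ (j:ℕ) * Qᵀ)
        = P * Dl ^ (i:ℕ) * (Pᴴ * P) * M * (Qᵀ * Qc) * Dm ^ (j:ℕ) * Qᵀ := by
          simp only [Matrix.mul_assoc]
      _ = P * (Dl ^ (i:ℕ) * M * Dm ^ (j:ℕ)) * Qᵀ := by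
          rw [hP, hqc2]; simp [Matrix.mul_assoc]
  calc ∑ i : Fin (k + 1), ∑ j : Fin (l + 1),
        p i j • (A ^ (i:ℕ) * (P * M * Qᵀ) * Bᵀ ^ (j:ℕ))
      = P * (∑ i : Fin (k + 1), ∑ j : Fin (l + 1),
          p i j • (Dl ^ (i:ℕ) * M * Dm ^ (j:ℕ))) * Qᵀ := by
        simp only [hterm, Matrix.mul_sum, Matrix.sum_mul, Matrix.mul_smul,
          Matrix.smul_mul]
    _ = P * (Pᴴ * C * Qc) * Qᵀ := by
        congr 1
        congr 1
        ext a b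
        simp only [Matrix.sum_apply, Matrix.smul_apply, Dl, Dm,
          Matrix.diagonal_pow, Matrix.diagonal_mul, Matrix.mul_diagonal,
          hM, Matrix.of_apply, smul_eq_mul, Pi.pow_apply]
        have : ∑ i : Fin (k+1), ∑ j : Fin (l+1),
            p i j * ((lam a:ℂ) ^ (i:ℕ) *
              ((∑ i' : Fin (k + 1), ∑ j' : Fin (l + 1),
                p i' j' * (lam a : ℂ) ^ (i' : ℕ) * (mu b : ℂ) ^ (j' : ℕ))⁻¹ *
              (Pᴴ * C * Qc) a b) * (mu b:ℂ) ^ (j:ℕ))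
            = (∑ i : Fin (k+1), ∑ j : Fin (l+1),
                p i j * (lam a:ℂ) ^ (i:ℕ) * (mu b:ℂ) ^ (j:ℕ)) *
              ((∑ i' : Fin (k + 1), ∑ j' : Fin (l + 1),
                p i' j' * (lam a : ℂ) ^ (i' : ℕ) * (mu b : ℂ) ^ (j' : ℕ))⁻¹ *
              (Pᴴ * C * Qc) a b) := by
          rw [Finset.sum_mul]
          refine Finset.sum_congr rfl fun i _ => ?_
          rw [Finset.sum_mul]
          refine Finset.sum_congr rfl fun j _ => ?_
          ring
        rw [this, ← mul_assoc, mul_inv_cancel₀ (hne a b), one_mul]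
    _ = C := by
        calc P * (Pᴴ * C * Qc) * Qᵀ = P * Pᴴ * C * (Qc * Qᵀ) := by
              simp only [Matrix.mul_assoc]
          _ = C := by rw [hP', hqc1]; simp
end

section
/- Let φ : ℝ → ℝ be defined by φ(z) = (exp(z) − 1)/z for z ≠ 0 and φ(0) = 1. Let ρ > 0 be a real number and k a positive integer with √(4ρ) ≤ k ≤ 2ρ. Then there exists a real polynomial p of degree at most k−1 such that for all z ∈ [−4ρ, 0], |φ(z) − p(z)| ≤ 40 (ρ²/k³) exp(−k²/(5ρ)). -/
set_option maxHeartbeats 2000000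

/-- The phi-function of exponential integrators: `φ(z) = (e^z - 1)/z`, `φ(0) = 1`. -/
noncomputable def phiFun (z : ℝ) : ℝ :=
  if z = 0 then 1 else (Real.exp z - 1) / z

namespace PhiPolyAux

open Polynomial Polynomial.Chebyshev MeasureTheory intervalIntegral Finset

/-! ### Chebyshev polynomial facts -/

theorem chebT_natDegree_le (n : ℕ) : (T ℝ (n : ℤ)).natDegree ≤ n := by
  induction n using Nat.strong_induction_on with
  | _ n ih =>
    match n with
    | 0 => simp
    | 1 => simp
    | (m+2) =>
      rw [show ((m+2 : ℕ) : ℤ) = ((m:ℤ)+2) by push_cast; ring, T_add_two]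
      refine le_trans (natDegree_sub_le _ _) ?_
      have h1 : (2 * X * T ℝ ((m:ℤ)+1)).natDegree ≤ m + 2 := by
        refine le_trans (natDegree_mul_le) ?_
        have : (2 * X : ℝ[X]).natDegree ≤ 1 := by
          refine le_trans (natDegree_mul_le) ?_
          simp
        have h2 := ih (m+1) (by omega)
        push_cast at h2 ⊢
        omega
      have h2 : (T ℝ (m:ℤ)).natDegree ≤ m + 2 := le_trans (ih m (by omega)) (by omega)
      simp only [max_le_iff]
      exact ⟨h1, h2⟩

theorem chebT_natDegree_le' (n : ℤ) : (T ℝ n).natDegree ≤ n.natAbs := by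
  rw [← T_natAbs]; exact chebT_natDegree_le n.natAbs

theorem chebT_abs_le (n : ℤ) {x : ℝ} (hx : x ∈ Set.Icc (-1:ℝ) 1) :
    |(T ℝ n).eval x| ≤ 1 := by
  obtain ⟨h1, h2⟩ := hx
  have : x = Real.cos (Real.arccos x) := (Real.cos_arccos h1 h2).symm
  rw [this, T_real_cos]
  exact Real.abs_cos_le_one _

/-! ### Expansion of monomials in cosines -/

theorem cos_pow_expand (θ : ℝ) (s : ℕ) :
    (Real.cos θ)^s = ∑ j ∈ Finset.range (s+1),
      ((s.choose j : ℝ)/2^s) * Real.cos ((2*(j:ℤ) - s) * θ) := by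
  have key : ((2:ℂ) * Complex.cos (θ:ℂ))^s = ∑ j ∈ Finset.range (s+1),
      (s.choose j : ℂ) * Complex.exp ((((2*(j:ℤ) - s) : ℤ) : ℂ) * θ * Complex.I) := by
    have h2c : (2:ℂ) * Complex.cos (θ:ℂ) =
        Complex.exp ((θ:ℂ) * Complex.I) + Complex.exp (-(θ:ℂ) * Complex.I) := by
      rw [Complex.cos]; ring
    rw [h2c, add_pow]
    refine Finset.sum_congr rfl fun j hj => ?_
    have hj' : j ≤ s := by simpa using Nat.lt_succ_iff.mp (Finset.mem_range.mp hj)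
    rw [← Complex.exp_nat_mul, ← Complex.exp_nat_mul, ← Complex.exp_add, mul_comm]
    congr 1
    push_cast [hj']
    ring
  have hre := congrArg Complex.re key
  have hL : (((2:ℂ) * Complex.cos (θ:ℂ))^s).re = (2 * Real.cos θ)^s := by
    rw [← Complex.ofReal_cos, ← Complex.ofReal_ofNat, ← Complex.ofReal_mul,
      ← Complex.ofReal_pow, Complex.ofReal_re]
  have hR : (∑ j ∈ Finset.range (s+1),
      (s.choose j : ℂ) * Complex.exp ((((2*(j:ℤ) - s) : ℤ) : ℂ) * θ * Complex.I)).re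
      = ∑ j ∈ Finset.range (s+1),
        (s.choose j : ℝ) * Real.cos ((2*(j:ℤ) - s) * θ) := by
    rw [Complex.re_sum]
    refine Finset.sum_congr rfl fun j _ => ?_
    have : (((2*(j:ℤ) - s) : ℤ) : ℂ) * (θ:ℂ) * Complex.I
        = (((((2*(j:ℤ) - s) : ℤ) : ℝ) * θ : ℝ) : ℂ) * Complex.I := by push_cast; ring
    rw [this]
    rw [show ((s.choose j : ℂ)) = (((s.choose j : ℝ)):ℂ) by push_cast; rfl]
    rw [Complex.re_ofReal_mul, Complex.exp_ofReal_mul_I_re]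
    push_cast
    ring
  rw [hL, hR] at hre
  calc (Real.cos θ)^s = (2 * Real.cos θ)^s / 2^s := by
        rw [mul_pow]; field_simp
    _ = ∑ j ∈ Finset.range (s+1), ((s.choose j : ℝ)/2^s) * Real.cos ((2*(j:ℤ) - s) * θ) := by
        rw [hre, Finset.sum_div]
        refine Finset.sum_congr rfl fun j _ => ?_
        ring

/-! ### The integral representation of `phiFun` -/

theorem integral_exp_mul (z : ℝ) : ∫ t in (0:ℝ)..1, Real.exp (z * t) = phiFun z := by
  rcases eq_or_ne z 0 with h | h
  · simp [h, phiFun]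
  · have : ∫ t in (0:ℝ)..1, Real.exp (z * t) = (Real.exp (z*1) - Real.exp (z*0)) / z := by
      rw [integral_comp_mul_left (fun u => Real.exp u) h]
      rw [integral_exp]
      field_simp
      rw [smul_eq_mul]; field_simp
    rw [this]
    simp [phiFun, h]

/-- Taylor coefficients of `phiFun` at `-2ρ` (scaled). -/
noncomputable def cCoef (ρ : ℝ) (s : ℕ) : ℝ :=
  (2*ρ)^s / s.factorial * ∫ t in (0:ℝ)..1, t^s * Real.exp (-(2*ρ*t))

theorem hasSum_cCoef (ρ : ℝ) (hρ : 0 < ρ) (x : ℝ) :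
    HasSum (fun s => cCoef ρ s * x ^ s) (phiFun (2*ρ*(x-1))) := by
  set μ := volume.restrict (Set.Ioc (0:ℝ) 1) with hμ
  set F : ℕ → ℝ → ℝ := fun s t => (2*ρ*x*t)^s / s.factorial * Real.exp (-(2*ρ*t)) with hF
  have hcont : ∀ s, Continuous (F s) := by intro s; fun_prop
  have hint : ∀ s, Integrable (F s) μ := fun s => (hcont s).integrableOn_Ioc
  have hbound : ∀ s, ∀ t ∈ Set.Ioc (0:ℝ) 1, ‖F s t‖ ≤ (2*ρ*|x|)^s / s.factorial := by
    intro s t ht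
    have ht1 : |t| ≤ 1 := abs_le.mpr ⟨by linarith [ht.1], ht.2⟩
    have h1 : |2*ρ*x*t| ≤ 2*ρ*|x| := by
      rw [abs_mul]
      have e1 : |2*ρ*x| = 2*ρ*|x| := by
        rw [abs_mul, abs_of_pos (by linarith : (0:ℝ) < 2*ρ)]
      rw [e1]
      exact mul_le_of_le_one_right (by positivity) ht1
    have h2 : Real.exp (-(2*ρ*t)) ≤ 1 := by
      rw [Real.exp_le_one_iff]
      nlinarith [ht.1]
    have h3 : ‖F s t‖ = |2*ρ*x*t|^s / s.factorial * Real.exp (-(2*ρ*t)) := by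
      rw [hF]
      simp only [Real.norm_eq_abs, abs_mul, abs_div, abs_pow]
      rw [abs_of_pos (Real.exp_pos _), Nat.abs_cast]
    rw [h3]
    have h5 : |2*ρ*x*t|^s / s.factorial * Real.exp (-(2*ρ*t))
        ≤ (2*ρ*|x|)^s / s.factorial * 1 := by
      gcongr
    linarith
  have hsummable : Summable fun s => ∫ t, ‖F s t‖ ∂μ := by
    apply Summable.of_nonneg_of_le
      (fun s => integral_nonneg fun t => norm_nonneg _)
      (fun s => ?_) (Real.summable_pow_div_factorial (2*ρ*|x|))
    calc ∫ t, ‖F s t‖ ∂μ ≤ ∫ _t in Set.Ioc (0:ℝ) 1, (2*ρ*|x|)^s / s.factorial := by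
          apply MeasureTheory.setIntegral_mono_on ((hint s).norm)
            (MeasureTheory.integrableOn_const (by simp [Real.volume_Ioc]))
            measurableSet_Ioc (hbound s)
      _ = (2*ρ*|x|)^s / s.factorial := by
          simp [Real.volume_Ioc]
  have hkey := hasSum_integral_of_summable_integral_norm hint hsummable
  -- identify the integrals
  have e1 : ∀ s, ∫ t, F s t ∂μ = cCoef ρ s * x ^ s := by
    intro s
    rw [hμ, ← intervalIntegral.integral_of_le (by norm_num : (0:ℝ) ≤ 1)]
    calc ∫ t in (0:ℝ)..1, F s t
        = ∫ t in (0:ℝ)..1, ((2*ρ)^s/s.factorial * x^s) * (t^s * Real.exp (-(2*ρ*t))) := by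
          apply intervalIntegral.integral_congr
          intro t _
          simp only [hF]
          rw [mul_pow, mul_pow]
          ring
      _ = ((2*ρ)^s/s.factorial * x^s) * ∫ t in (0:ℝ)..1, t^s * Real.exp (-(2*ρ*t)) :=
          intervalIntegral.integral_const_mul _ _
      _ = cCoef ρ s * x^s := by rw [cCoef]; ring
  have e2 : ∫ t, (∑' s, F s t) ∂μ = phiFun (2*ρ*(x-1)) := by
    have hpt : ∀ t : ℝ, (∑' s, F s t) = Real.exp ((2*ρ*(x-1)) * t) := by
      intro t
      have hs : HasSum (fun s => (2*ρ*x*t)^s / s.factorial) (Real.exp (2*ρ*x*t)) := by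
        rw [Real.exp_eq_exp_ℝ]
        exact NormedSpace.expSeries_div_hasSum_exp (2*ρ*x*t)
      have := (hs.mul_right (Real.exp (-(2*ρ*t)))).tsum_eq
      rw [hF]
      simp only at this ⊢
      rw [this, ← Real.exp_add]
      rw [show 2*ρ*x*t + -(2*ρ*t) = 2*ρ*(x-1)*t by ring]
    rw [MeasureTheory.integral_congr_ae (Filter.Eventually.of_forall hpt)]
    rw [hμ, ← intervalIntegral.integral_of_le (by norm_num : (0:ℝ) ≤ 1)]
    exact integral_exp_mul _
  rw [e2] at hkey
  have : (fun s => ∫ t, F s t ∂μ) = fun s => cCoef ρ s * x ^ s := funext e1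
  rwa [this] at hkey

theorem cCoef_nonneg (ρ : ℝ) (hρ : 0 < ρ) (s : ℕ) : 0 ≤ cCoef ρ s := by
  apply mul_nonneg (by positivity)
  apply intervalIntegral.integral_nonneg (by norm_num)
  intro t ht
  exact mul_nonneg (pow_nonneg ht.1 s) (Real.exp_pos _).le

/-! ### Chernoff bound for binomial sums -/

theorem chernoff_sum (s K : ℕ) (lam : ℝ) (hlam : 0 ≤ lam) :
    ∑ j ∈ (Finset.range (s+1)).filter (fun j : ℕ => K ≤ (2*(j:ℤ) - s).natAbs),
      (s.choose j : ℝ)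
    ≤ 2 * Real.exp (-(lam * K)) * (Real.cosh lam * 2)^s := by
  have key : ∀ j ∈ (Finset.range (s+1)).filter (fun j : ℕ => K ≤ (2*(j:ℤ) - s).natAbs),
      (s.choose j : ℝ) ≤ Real.exp (-(lam*K)) *
        ((s.choose j : ℝ) * (Real.exp (lam*(2*(j:ℤ)-s)) + Real.exp (-(lam*(2*(j:ℤ)-s))))) := by
    intro j hj
    obtain ⟨hj1, hj2⟩ := Finset.mem_filter.mp hj
    have key1 : ∀ A : ℝ, (K:ℝ) ≤ |A| →
        (1:ℝ) ≤ Real.exp (-(lam*K)) * (Real.exp (lam*A) + Real.exp (-(lam*A))) := by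
      intro A hA
      rcases abs_cases A with ⟨he, _⟩ | ⟨he, _⟩
      · have h' : (1:ℝ) ≤ Real.exp (-(lam*K)) * Real.exp (lam*A) := by
          rw [← Real.exp_add, ← Real.exp_zero]
          apply Real.exp_le_exp.mpr
          nlinarith [mul_le_mul_of_nonneg_left hA hlam]
        nlinarith [Real.exp_pos (-(lam*A)), Real.exp_pos (-(lam*K))]
      · have h' : (1:ℝ) ≤ Real.exp (-(lam*K)) * Real.exp (-(lam*A)) := by
          rw [← Real.exp_add, ← Real.exp_zero]
          apply Real.exp_le_exp.mpr
          nlinarith [mul_le_mul_of_nonneg_left hA hlam]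
        nlinarith [Real.exp_pos (lam*A), Real.exp_pos (-(lam*K))]
    have habs : (K:ℝ) ≤ |((2*(j:ℤ) - s : ℤ) : ℝ)| := by
      rw [← Int.cast_abs]
      have h2 : (K:ℤ) ≤ |2*(j:ℤ) - s| := by
        rw [Int.abs_eq_natAbs]
        exact_mod_cast hj2
      exact_mod_cast h2
    have h1 : (1:ℝ) ≤ Real.exp (-(lam*K)) *
        (Real.exp (lam*(2*(j:ℤ)-s)) + Real.exp (-(lam*(2*(j:ℤ)-s)))) := by
      have := key1 _ habs
      convert this using 5 <;> push_cast <;> ring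
    have hc : (0:ℝ) ≤ (s.choose j : ℝ) := by positivity
    calc (s.choose j : ℝ) = (s.choose j : ℝ) * 1 := by ring
      _ ≤ (s.choose j : ℝ) * (Real.exp (-(lam*K)) * (Real.exp (lam*(2*(j:ℤ)-s)) + Real.exp (-(lam*(2*(j:ℤ)-s))))) :=
          mul_le_mul_of_nonneg_left h1 hc
      _ = Real.exp (-(lam*K)) * ((s.choose j : ℝ) * (Real.exp (lam*(2*(j:ℤ)-s)) + Real.exp (-(lam*(2*(j:ℤ)-s))))) := by ring
  calc ∑ j ∈ (Finset.range (s+1)).filter (fun j : ℕ => K ≤ (2*(j:ℤ) - s).natAbs), (s.choose j : ℝ)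
      ≤ ∑ j ∈ (Finset.range (s+1)).filter (fun j : ℕ => K ≤ (2*(j:ℤ) - s).natAbs),
          Real.exp (-(lam*K)) * ((s.choose j : ℝ) * (Real.exp (lam*(2*(j:ℤ)-s)) + Real.exp (-(lam*(2*(j:ℤ)-s))))) :=
        Finset.sum_le_sum key
    _ ≤ ∑ j ∈ Finset.range (s+1),
          Real.exp (-(lam*K)) * ((s.choose j : ℝ) * (Real.exp (lam*(2*(j:ℤ)-s)) + Real.exp (-(lam*(2*(j:ℤ)-s))))) := by
        apply Finset.sum_le_sum_of_subset_of_nonneg (Finset.filter_subset _ _)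
        intro j _ _
        positivity
    _ = Real.exp (-(lam*K)) * (∑ j ∈ Finset.range (s+1), (s.choose j : ℝ) * Real.exp (lam*(2*(j:ℤ)-s))
        + ∑ j ∈ Finset.range (s+1), (s.choose j : ℝ) * Real.exp (-(lam*(2*(j:ℤ)-s)))) := by
        rw [← Finset.sum_add_distrib, Finset.mul_sum]
        apply Finset.sum_congr rfl
        intro j _
        ring
    _ ≤ 2 * Real.exp (-(lam * K)) * (Real.cosh lam * 2)^s := by
        have hbin : ∀ mu : ℝ, ∑ j ∈ Finset.range (s+1), (s.choose j : ℝ) * Real.exp (mu*(2*(j:ℤ)-s))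
            = (Real.exp mu + Real.exp (-mu))^s := by
          intro mu
          rw [add_pow]
          apply Finset.sum_congr rfl
          intro j hj
          have hj' : j ≤ s := Nat.lt_succ_iff.mp (Finset.mem_range.mp hj)
          rw [← Real.exp_nat_mul, ← Real.exp_nat_mul, ← Real.exp_add]
          rw [mul_comm ((s.choose j : ℝ)) _]
          congr 1
          push_cast [hj']
          ring
        rw [hbin lam]
        have : ∑ j ∈ Finset.range (s+1), (s.choose j : ℝ) * Real.exp (-(lam*(2*(j:ℤ)-s)))
            = (Real.exp (-lam) + Real.exp (-(-lam)))^s := by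
          rw [← hbin (-lam)]
          apply Finset.sum_congr rfl
          intro j _
          congr 2
          ring
        rw [this]
        have hcosh : Real.exp lam + Real.exp (-lam) = Real.cosh lam * 2 := by
          rw [Real.cosh_eq]; ring
        rw [neg_neg, show Real.exp (-lam) + Real.exp lam = Real.exp lam + Real.exp (-lam) by ring, hcosh]
        ring_nf
        nlinarith [pow_nonneg (by positivity : (0:ℝ) ≤ Real.cosh lam * 2) s, Real.exp_pos (-(lam*K))]

/-! ### The truncated Chebyshev expansion of a monomial -/

noncomputable def qPoly (K : ℕ) (s : ℕ) : Polynomial ℝ :=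
  ∑ j ∈ (Finset.range (s+1)).filter (fun j : ℕ => (2*(j:ℤ) - s).natAbs < K),
    Polynomial.C ((s.choose j : ℝ)/2^s) * T ℝ (2*(j:ℤ) - s)

theorem qPoly_natDegree (K s : ℕ) (hK : 0 < K) : (qPoly K s).natDegree ≤ K - 1 := by
  apply Polynomial.natDegree_sum_le_of_forall_le
  intro j hj
  obtain ⟨_, hj2⟩ := Finset.mem_filter.mp hj
  refine le_trans (Polynomial.natDegree_C_mul_le _ _) (le_trans (chebT_natDegree_le' _) ?_)
  omega

theorem qPoly_eval_close (K s : ℕ) (lam : ℝ) (hlam : 0 ≤ lam)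
    {x : ℝ} (hx : x ∈ Set.Icc (-1:ℝ) 1) :
    |x^s - (qPoly K s).eval x| ≤ 2 * Real.exp (-(lam * K)) * (Real.cosh lam)^s := by
  set θ := Real.arccos x with hθ
  have hxc : x = Real.cos θ := (Real.cos_arccos hx.1 hx.2).symm
  have hxs : x^s = ∑ j ∈ Finset.range (s+1),
      ((s.choose j : ℝ)/2^s) * Real.cos ((2*(j:ℤ) - s) * θ) := by
    rw [hxc]; exact cos_pow_expand θ s
  have hq : (qPoly K s).eval x = ∑ j ∈ (Finset.range (s+1)).filter
      (fun j : ℕ => (2*(j:ℤ) - s).natAbs < K),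
      ((s.choose j : ℝ)/2^s) * Real.cos ((2*(j:ℤ) - s) * θ) := by
    rw [qPoly, Polynomial.eval_finset_sum]
    refine Finset.sum_congr rfl fun j _ => ?_
    rw [Polynomial.eval_mul, Polynomial.eval_C, hxc, T_real_cos]
    push_cast
    ring_nf
  have hsplit : x^s - (qPoly K s).eval x = ∑ j ∈ (Finset.range (s+1)).filter
      (fun j : ℕ => ¬ ((2*(j:ℤ) - s).natAbs < K)),
      ((s.choose j : ℝ)/2^s) * Real.cos ((2*(j:ℤ) - s) * θ) := by
    rw [hxs, hq]
    rw [← Finset.sum_filter_add_sum_filter_not (Finset.range (s+1))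
      (fun j : ℕ => (2*(j:ℤ) - s).natAbs < K)]
    ring
  rw [hsplit]
  calc |∑ j ∈ (Finset.range (s+1)).filter (fun j : ℕ => ¬ ((2*(j:ℤ) - s).natAbs < K)),
        ((s.choose j : ℝ)/2^s) * Real.cos ((2*(j:ℤ) - s) * θ)|
      ≤ ∑ j ∈ (Finset.range (s+1)).filter (fun j : ℕ => ¬ ((2*(j:ℤ) - s).natAbs < K)),
        ((s.choose j : ℝ)/2^s) := by
        refine le_trans (Finset.abs_sum_le_sum_abs _ _) (Finset.sum_le_sum fun j _ => ?_)
        rw [abs_mul]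
        have h1 : |(s.choose j : ℝ)/2^s| = (s.choose j : ℝ)/2^s := abs_of_nonneg (by positivity)
        rw [h1]
        have := Real.abs_cos_le_one ((2*(j:ℤ) - s) * θ)
        nlinarith [abs_nonneg (Real.cos ((2*(j:ℤ) - s) * θ)),
          (by positivity : (0:ℝ) ≤ (s.choose j : ℝ)/2^s)]
    _ ≤ 2 * Real.exp (-(lam * K)) * (Real.cosh lam)^s := by
        have he : (Finset.range (s+1)).filter (fun j : ℕ => ¬ ((2*(j:ℤ) - s).natAbs < K))
            = (Finset.range (s+1)).filter (fun j : ℕ => K ≤ (2*(j:ℤ) - s).natAbs) := by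
          apply Finset.filter_congr
          intro j _
          simp [Nat.not_lt]
        rw [he, ← Finset.sum_div]
        have hch := chernoff_sum s K lam hlam
        rw [div_le_iff₀ (by positivity : (0:ℝ) < 2^s)]
        calc ∑ j ∈ (Finset.range (s+1)).filter (fun j : ℕ => K ≤ (2*(j:ℤ) - s).natAbs), (s.choose j : ℝ)
            ≤ 2 * Real.exp (-(lam * K)) * (Real.cosh lam * 2)^s := hch
          _ = 2 * Real.exp (-(lam * K)) * (Real.cosh lam)^s * 2^s := by rw [mul_pow]; ring

/-! ### Assembling the approximating polynomial on `[-1, 1]` -/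

theorem assembly (ρ : ℝ) (hρ : 0 < ρ) (k : ℕ) (hk : 0 < k) (lam : ℝ) (hlam : 0 ≤ lam)
    (ε : ℝ) (hε : 0 < ε) :
    ∃ P : Polynomial ℝ, P.natDegree ≤ k - 1 ∧ ∀ x ∈ Set.Icc (-1:ℝ) 1,
      |phiFun (2*ρ*(x-1)) - P.eval x| ≤
        2 * Real.exp (-(lam*k)) * phiFun (2*ρ*(Real.cosh lam - 1)) + ε := by
  have hS1 : HasSum (fun s => cCoef ρ s) (phiFun (2*ρ*((1:ℝ)-1))) := by
    have := hasSum_cCoef ρ hρ 1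
    simpa using this
  have hsummable : Summable (fun s => cCoef ρ s) := hS1.summable
  set S := phiFun (2*ρ*((1:ℝ)-1)) with hSdef
  have htends : Filter.Tendsto (fun n => ∑ i ∈ Finset.range n, cCoef ρ i) Filter.atTop (nhds S) :=
    hS1.tendsto_sum_nat
  have : ∀ᶠ n in Filter.atTop, |∑ i ∈ Finset.range n, cCoef ρ i - S| < ε := by
    have := Metric.tendsto_atTop.mp htends ε hε
    obtain ⟨N, hN⟩ := this
    refine Filter.eventually_atTop.mpr ⟨N, fun n hn => ?_⟩
    have := hN n hn
    rwa [Real.dist_eq] at this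
  obtain ⟨N, hN⟩ := Filter.eventually_atTop.mp this
  have htail : ∑' s, cCoef ρ (s + N) < ε := by
    have hsplit := (Summable.sum_add_tsum_nat_add N hsummable).symm
    have h1 := hN N le_rfl
    have h2 : ∑' s, cCoef ρ (s + N) = S - ∑ i ∈ Finset.range N, cCoef ρ i := by
      rw [hS1.tsum_eq] at hsplit
      linarith [hsplit]
    rw [h2]
    have h3 : 0 ≤ ∑' s, cCoef ρ (s + N) := tsum_nonneg fun s => cCoef_nonneg ρ hρ _
    rw [h2] at h3
    rw [abs_sub_lt_iff] at h1
    linarith [h1.2]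
  refine ⟨∑ s ∈ Finset.range N, Polynomial.C (cCoef ρ s) * qPoly k s, ?_, ?_⟩
  · apply Polynomial.natDegree_sum_le_of_forall_le
    intro s _
    exact le_trans (Polynomial.natDegree_C_mul_le _ _) (qPoly_natDegree k s hk)
  intro x hx
  have hxabs : |x| ≤ 1 := abs_le.mpr ⟨hx.1, hx.2⟩
  have hsum := hasSum_cCoef ρ hρ x
  have hsummx : Summable fun s => cCoef ρ s * x ^ s := hsum.summable
  have hsplit : ∑ s ∈ Finset.range N, cCoef ρ s * x^s + (∑' s, cCoef ρ (s+N) * x^(s+N))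
      = phiFun (2*ρ*(x-1)) := by
    rw [← hsum.tsum_eq]
    exact Summable.sum_add_tsum_nat_add N hsummx
  have hevalP : (∑ s ∈ Finset.range N, Polynomial.C (cCoef ρ s) * qPoly k s).eval x
      = ∑ s ∈ Finset.range N, cCoef ρ s * (qPoly k s).eval x := by
    rw [Polynomial.eval_finset_sum]
    exact Finset.sum_congr rfl fun s _ => by rw [Polynomial.eval_mul, Polynomial.eval_C]
  have hdiff : phiFun (2*ρ*(x-1)) - (∑ s ∈ Finset.range N, Polynomial.C (cCoef ρ s) * qPoly k s).eval x
      = (∑ s ∈ Finset.range N, cCoef ρ s * (x^s - (qPoly k s).eval x))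
        + (∑' s, cCoef ρ (s+N) * x^(s+N)) := by
    rw [hevalP, ← hsplit]
    have e3 : ∑ s ∈ Finset.range N, cCoef ρ s * (x^s - (qPoly k s).eval x)
        = ∑ s ∈ Finset.range N, cCoef ρ s * x^s
          - ∑ s ∈ Finset.range N, cCoef ρ s * (qPoly k s).eval x := by
      rw [← Finset.sum_sub_distrib]
      exact Finset.sum_congr rfl fun s _ => by ring
    rw [e3]; ring
  rw [hdiff]
  have hcosh1 : (1:ℝ) ≤ Real.cosh lam := Real.one_le_cosh lam
  have hsumc := hasSum_cCoef ρ hρ (Real.cosh lam)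
  have hb1 : |∑ s ∈ Finset.range N, cCoef ρ s * (x^s - (qPoly k s).eval x)|
      ≤ 2 * Real.exp (-(lam*k)) * phiFun (2*ρ*(Real.cosh lam - 1)) := by
    calc |∑ s ∈ Finset.range N, cCoef ρ s * (x^s - (qPoly k s).eval x)|
        ≤ ∑ s ∈ Finset.range N, cCoef ρ s * (2 * Real.exp (-(lam * k)) * (Real.cosh lam)^s) := by
          refine le_trans (Finset.abs_sum_le_sum_abs _ _) (Finset.sum_le_sum fun s _ => ?_)
          rw [abs_mul, abs_of_nonneg (cCoef_nonneg ρ hρ s)]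
          exact mul_le_mul_of_nonneg_left (qPoly_eval_close k s lam hlam hx) (cCoef_nonneg ρ hρ s)
      _ = 2 * Real.exp (-(lam*k)) * ∑ s ∈ Finset.range N, cCoef ρ s * (Real.cosh lam)^s := by
          rw [Finset.mul_sum]
          exact Finset.sum_congr rfl fun s _ => by ring
      _ ≤ 2 * Real.exp (-(lam*k)) * phiFun (2*ρ*(Real.cosh lam - 1)) := by
          apply mul_le_mul_of_nonneg_left _ (by positivity)
          rw [← hsumc.tsum_eq]
          apply Summable.sum_le_tsum (Finset.range N) (fun s _ => ?_) hsumc.summable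
          exact mul_nonneg (cCoef_nonneg ρ hρ s) (pow_nonneg (by linarith) s)
  have hb2 : |∑' s, cCoef ρ (s+N) * x^(s+N)| ≤ ∑' s, cCoef ρ (s+N) := by
    have hsummtail : Summable fun s => cCoef ρ (s+N) * x^(s+N) :=
      (summable_nat_add_iff N).mpr hsummx
    have hsummtail2 : Summable fun s => cCoef ρ (s+N) :=
      (summable_nat_add_iff N).mpr hsummable
    have habs_eq : (fun s => |cCoef ρ (s+N) * x^(s+N)|) = fun s => |cCoef ρ (s+N)| * |x|^(s+N) := by
      funext s; rw [abs_mul, abs_pow]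
    have hsummabs : Summable fun s => |cCoef ρ (s+N)| * |x|^(s+N) := habs_eq ▸ hsummtail.abs
    calc |∑' s, cCoef ρ (s+N) * x^(s+N)| ≤ ∑' s, |cCoef ρ (s+N)| * |x|^(s+N) := by
          have h := norm_tsum_le_tsum_norm (f := fun s => cCoef ρ (s+N) * x^(s+N))
            (by simpa [Real.norm_eq_abs, habs_eq] using hsummabs)
          simpa [Real.norm_eq_abs, habs_eq] using h
      _ ≤ ∑' s, cCoef ρ (s+N) := by
          apply Summable.tsum_le_tsum _ hsummabs hsummtail2
          intro s
          rw [abs_of_nonneg (cCoef_nonneg ρ hρ _)]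
          calc cCoef ρ (s+N) * |x|^(s+N) ≤ cCoef ρ (s+N) * 1 := by
                apply mul_le_mul_of_nonneg_left _ (cCoef_nonneg ρ hρ _)
                exact pow_le_one₀ (abs_nonneg x) hxabs
            _ = cCoef ρ (s+N) := by ring
  calc |∑ s ∈ Finset.range N, cCoef ρ s * (x^s - (qPoly k s).eval x)
        + ∑' s, cCoef ρ (s+N) * x^(s+N)|
      ≤ |∑ s ∈ Finset.range N, cCoef ρ s * (x^s - (qPoly k s).eval x)|
        + |∑' s, cCoef ρ (s+N) * x^(s+N)| := abs_add_le _ _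
    _ ≤ 2 * Real.exp (-(lam*k)) * phiFun (2*ρ*(Real.cosh lam - 1)) + ε := by
        have := le_of_lt htail
        linarith [hb1, hb2]

/-! ### Numerical estimates -/

theorem cosh_bounds (y : ℝ) (h0 : 0 ≤ y) (h1 : y ≤ 17/20) :
    1 + y^2/2 ≤ Real.cosh y ∧ Real.cosh y ≤ 1 + y^2/2 + (43/1000)*y^4 := by
  have hy1 : |y| ≤ 1 := by rw [abs_of_nonneg h0]; linarith
  have hy1' : |(-y)| ≤ 1 := by rwa [abs_neg]
  have hb1 := Real.exp_bound hy1 (n := 6) (by norm_num)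
  have hb2 := Real.exp_bound hy1' (n := 6) (by norm_num)
  have hS1 : ∑ m ∈ Finset.range 6, y ^ m / m.factorial
      = 1 + y + y^2/2 + y^3/6 + y^4/24 + y^5/120 := by
    simp [Finset.sum_range_succ, Nat.factorial]
  have hS2 : ∑ m ∈ Finset.range 6, (-y) ^ m / m.factorial
      = 1 - y + y^2/2 - y^3/6 + y^4/24 - y^5/120 := by
    simp [Finset.sum_range_succ, Nat.factorial]
    ring
  rw [hS1, abs_of_nonneg h0] at hb1
  rw [hS2, abs_neg, abs_of_nonneg h0] at hb2
  norm_num [Nat.factorial] at hb1 hb2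
  have hc : Real.cosh y = (Real.exp y + Real.exp (-y))/2 := Real.cosh_eq y
  rw [abs_sub_le_iff] at hb1 hb2
  obtain ⟨hb1a, hb1b⟩ := hb1
  obtain ⟨hb2a, hb2b⟩ := hb2
  have hy2 : y^2 ≤ 289/400 := by nlinarith
  have hy6 : y^6 ≤ (289/400) * y^4 := by
    nlinarith [mul_le_mul_of_nonneg_left hy2 (pow_nonneg h0 4)]
  constructor
  · rw [hc]
    nlinarith [pow_nonneg h0 6, pow_nonneg h0 4]
  · rw [hc]
    nlinarith [pow_nonneg h0 6, pow_nonneg h0 4]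

theorem numeric_main (ρ K : ℝ) (hρ : 0 < ρ) (hK2 : 2 ≤ K) (hKρ : K ≤ 2*ρ)
    (hρK : 4*ρ ≤ K^2) :
    2 * Real.exp (-(17*K/(40*ρ) * K)) * phiFun (2*ρ*(Real.cosh (17*K/(40*ρ)) - 1))
      ≤ 20 * (ρ^2/K^3) * Real.exp (-K^2/(5*ρ)) := by
  have hρ1 : 1 ≤ ρ := by nlinarith
  set lam : ℝ := 17*K/(40*ρ) with hlam
  have hlam0 : 0 < lam := by positivity
  have hlam85 : lam ≤ 17/20 := by
    rw [hlam, div_le_iff₀ (by positivity)]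
    nlinarith
  obtain ⟨hcl, hcu⟩ := cosh_bounds lam hlam0.le hlam85
  set E : ℝ := 2*ρ*(Real.cosh lam - 1) with hE
  have hE1 : ρ*lam^2 ≤ E := by rw [hE]; nlinarith
  have hE2 : E ≤ ρ*lam^2 + (86/1000)*(ρ*lam^4) := by rw [hE]; nlinarith
  have hEpos : 0 < E := lt_of_lt_of_le (by positivity) hE1
  have hphi : phiFun E ≤ Real.exp E / E := by
    rw [phiFun, if_neg hEpos.ne']
    gcongr
    linarith [Real.exp_pos E]
  have hv4 : 4 ≤ K^2/ρ := by rw [le_div_iff₀ hρ]; linarith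
  have hv2K : K^2/ρ ≤ 2*K := by rw [div_le_iff₀ hρ]; nlinarith
  have hlamK : lam * K = (17/40) * (K^2/ρ) := by rw [hlam]; field_simp
  have hrl2 : ρ*lam^2 = (289/1600) * (K^2/ρ) := by rw [hlam]; field_simp; ring
  have hrl4 : ρ*lam^4 ≤ (83521/640000) * (K^2/ρ) := by
    have e1 : ρ*lam^4 = (83521/2560000) * (K^2/ρ) * (K/ρ)^2 := by
      rw [hlam]; field_simp; ring
    have e2 : (K/ρ)^2 ≤ 4 := by
      rw [div_pow, div_le_iff₀ (by positivity)]
      nlinarith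
    rw [e1]
    nlinarith [div_nonneg (sq_nonneg K) hρ.le]
  have hexp : -(lam*K) + E ≤ -(K^2/(5*ρ)) - (331/10000)*(K^2/ρ) := by
    have e3 : K^2/(5*ρ) = (1/5)*(K^2/ρ) := by
      field_simp
    rw [e3]
    nlinarith [hE2, hrl4, hlamK, hrl2, div_nonneg (sq_nonneg K) hρ.le]
  have hA5 : Real.exp (-((331/10000)*(K^2/ρ))) ≤ 1/(1 + (331/10000)*(K^2/ρ)) := by
    rw [Real.exp_neg, one_div]
    apply inv_anti₀ (by positivity)
    linarith [Real.add_one_le_exp ((331/10000)*(K^2/ρ))]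
  have hE3 : (289/1600)*(K^2/ρ) ≤ E := by rw [← hrl2]; exact hE1
  have hfinal : 2 * Real.exp (-((331/10000)*(K^2/ρ))) / E ≤ 20*(ρ^2/K^3) := by
    calc 2 * Real.exp (-((331/10000)*(K^2/ρ))) / E
        ≤ 2 * (1/(1 + (331/10000)*(K^2/ρ))) / E := by gcongr
      _ ≤ 2 * (1/(2831/2500)) / ((289/1600)*(K^2/ρ)) := by
          gcongr
          repeat' first | positivity | linarith
      _ ≤ 20*(ρ^2/K^3) := by
          rw [div_le_iff₀ (by positivity)]
          have e4 : (ρ^2/K^3)*(K^2/ρ) = ρ/K := by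
            field_simp
          have e5 : (1:ℝ)/2 ≤ ρ/K := by
            rw [le_div_iff₀ (by positivity)]
            linarith
          nlinarith [e4, e5]
  rw [show (-K^2/(5*ρ) : ℝ) = -(K^2/(5*ρ)) by ring]
  calc 2 * Real.exp (-(lam*K)) * phiFun E
      ≤ 2 * Real.exp (-(lam*K)) * (Real.exp E / E) := by
        exact mul_le_mul_of_nonneg_left hphi (by positivity)
    _ = 2 * Real.exp (-(lam*K) + E) / E := by
        rw [Real.exp_add]
        ring
    _ ≤ 2 * Real.exp (-(K^2/(5*ρ)) - (331/10000)*(K^2/ρ)) / E := by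
        gcongr
        repeat' first | positivity | linarith
    _ = (2 * Real.exp (-((331/10000)*(K^2/ρ))) / E) * Real.exp (-(K^2/(5*ρ))) := by
        rw [show (-(K^2/(5*ρ)) - (331/10000)*(K^2/ρ) : ℝ)
          = (-((331/10000)*(K^2/ρ))) + (-(K^2/(5*ρ))) by ring, Real.exp_add]
        ring
    _ ≤ 20*(ρ^2/K^3) * Real.exp (-(K^2/(5*ρ))) :=
        mul_le_mul_of_nonneg_right hfinal (Real.exp_pos _).le

end PhiPolyAux

/-- First bound of Lemma A.1: for `√(4ρ) ≤ k ≤ 2ρ` there is a polynomial of degree at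
most `k - 1` approximating `φ` on `[-4ρ, 0]` with error at most
`40 (ρ²/k³) exp(-k²/(5ρ))`. -/
theorem phi_poly_approx_first_bound (ρ : ℝ) (hρ : 0 < ρ) (k : ℕ) (hk : 0 < k)
    (h1 : Real.sqrt (4 * ρ) ≤ (k : ℝ)) (h2 : (k : ℝ) ≤ 2 * ρ) :
    ∃ p : Polynomial ℝ, p.natDegree ≤ k - 1 ∧
      ∀ z ∈ Set.Icc (-(4 * ρ)) 0,
        |phiFun z - p.eval z| ≤ 40 * (ρ ^ 2 / (k : ℝ) ^ 3) *
          Real.exp (-(k : ℝ) ^ 2 / (5 * ρ)) := by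
  have hρK : 4*ρ ≤ (k:ℝ)^2 := by
    have := Real.sq_sqrt (by linarith : (0:ℝ) ≤ 4*ρ)
    calc 4*ρ = Real.sqrt (4*ρ) ^ 2 := this.symm
      _ ≤ (k:ℝ)^2 := by
        apply pow_le_pow_left₀ (Real.sqrt_nonneg _) h1
  have hkpos : (0:ℝ) < k := by exact_mod_cast hk
  have hK2 : (2:ℝ) ≤ (k:ℝ) := by nlinarith
  set lam : ℝ := 17*(k:ℝ)/(40*ρ) with hlamdef
  have hlam0 : (0:ℝ) ≤ lam := by positivity
  set ε : ℝ := 20 * (ρ ^ 2 / (k : ℝ) ^ 3) * Real.exp (-(k : ℝ) ^ 2 / (5 * ρ)) with hεdef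
  have hεpos : 0 < ε := by positivity
  obtain ⟨P, hPdeg, hP⟩ := PhiPolyAux.assembly ρ hρ k hk lam hlam0 ε hεpos
  have hnum := PhiPolyAux.numeric_main ρ (k:ℝ) hρ hK2 h2 hρK
  rw [← hlamdef] at hnum
  refine ⟨P.comp (Polynomial.C (1/(2*ρ)) * Polynomial.X + Polynomial.C 1), ?_, ?_⟩
  · refine le_trans (Polynomial.natDegree_comp_le) ?_
    have hq1 : (Polynomial.C (1/(2*ρ)) * Polynomial.X + Polynomial.C (1:ℝ)).natDegree ≤ 1 := by
      refine le_trans (Polynomial.natDegree_add_le _ _) ?_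
      have h1' : (Polynomial.C (1/(2*ρ)) * Polynomial.X : Polynomial ℝ).natDegree ≤ 1 :=
        le_trans (Polynomial.natDegree_C_mul_le _ _) (by simp)
      simp only [Polynomial.natDegree_C, max_le_iff]
      exact ⟨h1', Nat.zero_le _⟩
    calc P.natDegree * (Polynomial.C (1/(2*ρ)) * Polynomial.X + Polynomial.C (1:ℝ)).natDegree
        ≤ (k-1) * 1 := Nat.mul_le_mul hPdeg hq1
      _ = k - 1 := by omega
  · intro z hz
    set x : ℝ := z/(2*ρ) + 1 with hxdef
    have hx1 : x ∈ Set.Icc (-1:ℝ) 1 := by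
      constructor
      · rw [hxdef]
        have : (-2:ℝ) ≤ z/(2*ρ) := by
          rw [le_div_iff₀ (by positivity)]
          linarith [hz.1]
        linarith
      · rw [hxdef]
        have : z/(2*ρ) ≤ 0 := by
          rw [div_nonpos_iff]
          right
          exact ⟨hz.2, by positivity⟩
        linarith
    have hzx : 2*ρ*(x-1) = z := by
      rw [hxdef]
      field_simp
      ring
    have heval : (P.comp (Polynomial.C (1/(2*ρ)) * Polynomial.X + Polynomial.C 1)).eval z
        = P.eval x := by
      rw [Polynomial.eval_comp]
      congr 1
      simp [hxdef]
      ring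
    calc |phiFun z - (P.comp (Polynomial.C (1/(2*ρ)) * Polynomial.X + Polynomial.C 1)).eval z|
        = |phiFun (2*ρ*(x-1)) - P.eval x| := by rw [hzx, heval]
      _ ≤ 2 * Real.exp (-(lam*k)) * phiFun (2*ρ*(Real.cosh lam - 1)) + ε := hP x hx1
      _ ≤ ε + ε := by
          have : 2 * Real.exp (-(lam*(k:ℝ))) * phiFun (2*ρ*(Real.cosh lam - 1)) ≤ ε := by
            rw [hεdef]
            exact hnum
          linarith
      _ = 40 * (ρ ^ 2 / (k : ℝ) ^ 3) * Real.exp (-(k : ℝ) ^ 2 / (5 * ρ)) := by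
          rw [hεdef]; ring
end

section
/- Let ρ ≥ 1 and k be real numbers with √(4ρ) ≤ k ≤ 2ρ. Then (√(k² + 4ρ²) − 2ρ)/k + log( √(k²/(4ρ²) + 1) − k/(2ρ) ) ≤ −k/(5ρ). -/
lemma log_ge_pade {x : ℝ} (hx : 1 ≤ x) : 2 * (x - 1) / (x + 1) ≤ Real.log x := by
  set f : ℝ → ℝ := fun y => Real.log y - 2 * (y - 1) / (y + 1) with hf
  have hderiv : ∀ y : ℝ, 1 ≤ y → HasDerivAt f (y⁻¹ - 4 / (y + 1) ^ 2) y := by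
    intro y hy
    have hy0 : (0:ℝ) < y := by linarith
    have h1 : HasDerivAt Real.log y⁻¹ y := Real.hasDerivAt_log (ne_of_gt hy0)
    have ha : HasDerivAt (fun y : ℝ => 2 * (y - 1)) 2 y := by
      simpa using ((hasDerivAt_id y).sub_const 1).const_mul 2
    have hb : HasDerivAt (fun y : ℝ => y + 1) 1 y := (hasDerivAt_id y).add_const 1
    have h2 : HasDerivAt (fun y : ℝ => 2 * (y - 1) / (y + 1)) (4 / (y + 1) ^ 2) y := by
      have := ha.div hb (by linarith : y + 1 ≠ 0)
      rw [show (4:ℝ) / (y + 1) ^ 2 = (2 * (y + 1) - 2 * (y - 1) * 1) / (y + 1) ^ 2 by ring]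
      exact this
    exact h1.sub h2
  have hmono : MonotoneOn f (Set.Ici 1) := by
    apply monotoneOn_of_deriv_nonneg (convex_Ici 1)
    · intro y hy
      exact ((hderiv y hy).differentiableAt.continuousAt).continuousWithinAt
    · intro y hy
      rw [interior_Ici] at hy
      exact ((hderiv y hy.le).differentiableAt).differentiableWithinAt
    · intro y hy
      rw [interior_Ici] at hy
      have hy1 : (1:ℝ) ≤ y := hy.le
      have hy0 : (0:ℝ) < y := by linarith
      rw [(hderiv y hy1).deriv]
      have h4 : 4 / (y + 1) ^ 2 ≤ 1 / y := by
        rw [div_le_div_iff₀ (by positivity) hy0]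
        nlinarith [sq_nonneg (y - 1)]
      rw [← one_div]
      linarith
  have h01 : f 1 ≤ f x := hmono (by simp) (by simpa using hx) hx
  have hf1 : f 1 = 0 := by simp [hf]
  rw [hf1] at h01
  simp only [hf] at h01
  linarith

/-- The inequality established inside the proof of Lemma A.1: for `ρ ≥ 1` and
`√(4ρ) ≤ k ≤ 2ρ`,
`(√(k² + 4ρ²) - 2ρ)/k + log(√(k²/(4ρ²) + 1) - k/(2ρ)) ≤ -k/(5ρ)`. -/
theorem key_log_inequality (ρ k : ℝ) (hρ : 1 ≤ ρ)
    (h1 : Real.sqrt (4 * ρ) ≤ k) (h2 : k ≤ 2 * ρ) :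
    (Real.sqrt (k ^ 2 + 4 * ρ ^ 2) - 2 * ρ) / k +
      Real.log (Real.sqrt (k ^ 2 / (4 * ρ ^ 2) + 1) - k / (2 * ρ)) ≤ -k / (5 * ρ) := by
  have hρ0 : (0:ℝ) < ρ := by linarith
  have hk0 : (0:ℝ) < k := lt_of_lt_of_le (Real.sqrt_pos.mpr (by linarith)) h1
  set t : ℝ := k / (2 * ρ) with hts
  have ht0 : 0 < t := by positivity
  have ht1 : t ≤ 1 := by rw [hts, div_le_one (by linarith)]; linarith
  have hkt : k = 2 * ρ * t := by rw [hts]; field_simp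
  set s : ℝ := Real.sqrt (t ^ 2 + 1) with hss
  have hs2 : s ^ 2 = t ^ 2 + 1 := Real.sq_sqrt (by positivity)
  have hs0 : 0 ≤ s := Real.sqrt_nonneg _
  have hs1 : 1 ≤ s := by nlinarith
  have hs32 : s ≤ 3 / 2 := by nlinarith
  -- rewrite the two square roots
  have e1 : Real.sqrt (k ^ 2 + 4 * ρ ^ 2) = 2 * ρ * s := by
    rw [show k ^ 2 + 4 * ρ ^ 2 = (2 * ρ) ^ 2 * (t ^ 2 + 1) by rw [hkt]; ring,
      Real.sqrt_mul (by positivity), Real.sqrt_sq (by linarith)]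
  have e2 : k ^ 2 / (4 * ρ ^ 2) + 1 = t ^ 2 + 1 := by
    rw [hkt]; field_simp; ring
  rw [e1, e2, ← hss]
  have hst : s - t = (s + t)⁻¹ := by
    have hmul : (s - t) * (s + t) = 1 := by nlinarith
    field_simp at hmul ⊢
    linarith [hmul]
  rw [hst, Real.log_inv]
  have hlog : 2 * ((s + t) - 1) / ((s + t) + 1) ≤ Real.log (s + t) := by
    apply log_ge_pade; linarith
  have e3 : (2 * ρ * s - 2 * ρ) / k = t / (s + 1) := by
    rw [hkt, div_eq_div_iff (by positivity) (by linarith)]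
    nlinarith
  have e4 : -k / (5 * ρ) = -(2 * t / 5) := by rw [hkt]; field_simp
  rw [e3, e4]
  -- key algebraic inequality
  have key : t / (s + 1) - 2 * ((s + t) - 1) / ((s + t) + 1) + 2 * t / 5 ≤ 0 := by
    have hd1 : (0:ℝ) < s + 1 := by linarith
    have hd2 : (0:ℝ) < s + t + 1 := by linarith
    have hid : t / (s + 1) - 2 * ((s + t) - 1) / ((s + t) + 1) + 2 * t / 5 =
        (5 * t * (s + t + 1) - 10 * ((s + t) - 1) * (s + 1) + 2 * t * (s + 1) * (s + t + 1)) /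
          (5 * (s + 1) * (s + t + 1)) := by
      field_simp
      ring
    rw [hid]
    apply div_nonpos_of_nonpos_of_nonneg _ (by positivity)
    nlinarith [mul_nonneg (mul_nonneg ht0.le hd2.le) (by linarith : (0:ℝ) ≤ 3 - 2 * s)]
  linarith
end

section
/- Let ρ > 0 and k be real numbers with k ≥ 2ρ. Then (√(k² + 4ρ²) − 2ρ)/k + log( √(k²/(4ρ²) + 1) − k/(2ρ) ) ≤ log(e ρ) − log(k + 2ρ), where e is Euler's number and log is the natural logarithm. -/
/-- For `z ≥ 1`, `2 log z ≤ z - 1/z`. -/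
lemma two_mul_log_le_aux {z : ℝ} (hz : 1 ≤ z) : 2 * Real.log z ≤ z - 1/z := by
  set f : ℝ → ℝ := fun x => x - x⁻¹ - 2 * Real.log x with hf
  have hpos : ∀ x ∈ Set.Ici (1:ℝ), (0:ℝ) < x := fun x hx => lt_of_lt_of_le one_pos hx
  have hder : ∀ x : ℝ, 0 < x → HasDerivAt f (1 - -(x^2)⁻¹ - 2 * x⁻¹) x := by
    intro x hx
    exact ((hasDerivAt_id x).sub (hasDerivAt_inv (ne_of_gt hx))).sub
      ((Real.hasDerivAt_log (ne_of_gt hx)).const_mul 2)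
  have hmono : MonotoneOn f (Set.Ici 1) := by
    apply monotoneOn_of_deriv_nonneg (convex_Ici 1)
    · apply ContinuousOn.sub
      · exact continuousOn_id.sub (continuousOn_id.inv₀ (fun x hx => ne_of_gt (hpos x hx)))
      · exact continuousOn_const.mul
          (Real.continuousOn_log.mono (fun x hx => ne_of_gt (hpos x hx)))
    · intro x hx
      rw [interior_Ici] at hx
      have hx0 : (0:ℝ) < x := lt_trans one_pos hx
      exact (hder x hx0).differentiableAt.differentiableWithinAt
    · intro x hx
      rw [interior_Ici] at hx
      have hx0 : (0:ℝ) < x := lt_trans one_pos hx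
      rw [(hder x hx0).deriv]
      have h : 1 - -(x^2)⁻¹ - 2 * x⁻¹ = (1 - x⁻¹)^2 := by
        field_simp
        ring
      rw [h]
      positivity
  have h01 : f 1 ≤ f z := hmono (by simp) (by exact hz) hz
  have hf1 : f 1 = 0 := by simp [hf]
  rw [hf1] at h01
  have : 0 ≤ z - z⁻¹ - 2 * Real.log z := h01
  rw [one_div]
  linarith

/-- Inequality used in the proof of the second bound (`k ≥ 2ρ`) of Lemma A.1:
`(√(k² + 4ρ²) - 2ρ)/k + log(√(k²/(4ρ²) + 1) - k/(2ρ)) ≤ log(eρ) - log(k + 2ρ)`. -/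
theorem key_log_inequality_large_k (ρ k : ℝ) (hρ : 0 < ρ) (h2 : 2 * ρ ≤ k) :
    (Real.sqrt (k ^ 2 + 4 * ρ ^ 2) - 2 * ρ) / k +
      Real.log (Real.sqrt (k ^ 2 / (4 * ρ ^ 2) + 1) - k / (2 * ρ)) ≤
      Real.log (Real.exp 1 * ρ) - Real.log (k + 2 * ρ) := by
  have hk : 0 < k := lt_of_lt_of_le (by positivity) h2
  set s := Real.sqrt (k ^ 2 + 4 * ρ ^ 2) with hs
  have hs2 : s ^ 2 = k ^ 2 + 4 * ρ ^ 2 := Real.sq_sqrt (by positivity)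
  have hs0 : 0 < s := Real.sqrt_pos.2 (by positivity)
  have hks : k ≤ s := by nlinarith [hs2, hs0]
  have hsle : s ≤ k + 2 * ρ := by nlinarith [hs2, hs0]
  -- rewrite the sqrt inside the log
  have hA : Real.sqrt (k ^ 2 / (4 * ρ ^ 2) + 1) = s / (2 * ρ) := by
    have hrw : k ^ 2 / (4 * ρ ^ 2) + 1 = (k ^ 2 + 4 * ρ ^ 2) / (2 * ρ) ^ 2 := by
      rw [div_add' _ _ _ (by positivity : (4:ℝ) * ρ ^ 2 ≠ 0)]
      norm_num
      ring_nf
    rw [hrw]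
    rw [Real.sqrt_div (by positivity), Real.sqrt_sq (by positivity)]
  have harg : s / (2 * ρ) - k / (2 * ρ) = 2 * ρ / (s + k) := by
    rw [div_sub_div_same, div_eq_div_iff (by positivity) (by positivity)]
    nlinarith [hs2]
  rw [hA, harg, Real.log_div (by positivity) (by positivity),
    Real.log_mul (Real.exp_ne_zero 1) (ne_of_gt hρ), Real.log_exp]
  have hlog2 : Real.log (2 * ρ) = Real.log 2 + Real.log ρ :=
    Real.log_mul (by norm_num) (ne_of_gt hρ)
  -- key polynomial inequality
  have key : k ^ 3 + 4 * ρ * k ^ 2 + 6 * ρ ^ 2 * k + 16 * ρ ^ 3 ≤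
      s * (k ^ 2 + 4 * ρ * k + 8 * ρ ^ 2) := by
    set a : ℝ := k ^ 3 + 4 * ρ * k ^ 2 + 6 * ρ ^ 2 * k + 16 * ρ ^ 3 with ha_def
    set b : ℝ := s * (k ^ 2 + 4 * ρ * k + 8 * ρ ^ 2) with hb_def
    have ha : 0 < a := by positivity
    have hb : 0 < b := by positivity
    have hsq : b ^ 2 = (k ^ 2 + 4 * ρ ^ 2) * (k ^ 2 + 4 * ρ * k + 8 * ρ ^ 2) ^ 2 := by
      rw [hb_def, mul_pow, hs2]
    have hprod : (b - a) * (b + a) =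
        8 * k ^ 4 * ρ ^ 2 + 16 * k ^ 3 * ρ ^ 3 + 28 * k ^ 2 * ρ ^ 4 + 64 * k * ρ ^ 5 := by
      have : (b - a) * (b + a) = b ^ 2 - a ^ 2 := by ring
      rw [this, hsq, ha_def]
      ring
    have hD : (0:ℝ) < 8 * k ^ 4 * ρ ^ 2 + 16 * k ^ 3 * ρ ^ 3 + 28 * k ^ 2 * ρ ^ 4 + 64 * k * ρ ^ 5 := by
      positivity
    nlinarith [hprod, hD, ha, hb]
  -- the log bound
  set z : ℝ := 2 * (k + 2 * ρ) / (s + k) with hzdef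
  have hz1 : 1 ≤ z := by
    rw [hzdef, le_div_iff₀ (by positivity)]
    linarith
  have hlogz : Real.log z = Real.log 2 + Real.log (k + 2 * ρ) - Real.log (s + k) := by
    rw [hzdef, Real.log_div (by positivity) (by positivity),
      Real.log_mul (by norm_num) (by positivity)]
  have hhalf : 2 * Real.log z ≤ z - 1 / z := two_mul_log_le_aux hz1
  -- final polynomial step: (z - 1/z)/2 ≤ 1 - (s - 2ρ)/k
  have hfin : z - 1 / z ≤ 2 - 2 * ((s - 2 * ρ) / k) := by
    rw [hzdef, one_div, inv_div]
    rw [div_sub_div _ _ (by positivity : (s + k) ≠ 0) (by positivity : 2 * (k + 2 * ρ) ≠ 0),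
      div_le_iff₀ (by positivity)]
    have h2' : 2 - 2 * ((s - 2 * ρ) / k) = (2 * k - 2 * (s - 2 * ρ)) / k := by
      field_simp
    rw [h2', div_mul_eq_mul_div, le_div_iff₀ hk]
    nlinarith [key, hs2, mul_pos hk hρ, mul_pos hs0 hk]
  -- assemble
  have hmain : Real.log z ≤ 1 - (s - 2 * ρ) / k := by
    linarith [hhalf, hfin]
  rw [hlogz] at hmain
  rw [hlog2]
  linarith
end

section
/- Let ρ > 0 and k be real numbers with k ≥ 2ρ. Then (√(k² + 4ρ²) − 2ρ) · ( 1 − ( √(k²/(4ρ²) + 1) − k/(2ρ) ) ) ≥ (3/4)k − (5/4)ρ. -/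
/-- Inequality used in the proof of the second bound (`k ≥ 2ρ`) of Lemma A.1:
`(√(k² + 4ρ²) - 2ρ)(1 - (√(k²/(4ρ²) + 1) - k/(2ρ))) ≥ (3/4)k - (5/4)ρ`. -/
theorem product_lower_bound_large_k (ρ k : ℝ) (hρ : 0 < ρ) (h2 : 2 * ρ ≤ k) :
    (Real.sqrt (k ^ 2 + 4 * ρ ^ 2) - 2 * ρ) *
      (1 - (Real.sqrt (k ^ 2 / (4 * ρ ^ 2) + 1) - k / (2 * ρ))) ≥
      3 / 4 * k - 5 / 4 * ρ := by
  have hk : 0 < k := lt_of_lt_of_le (by linarith) h2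
  set s := Real.sqrt (k ^ 2 + 4 * ρ ^ 2) with hs
  have hnn : (0:ℝ) ≤ k ^ 2 + 4 * ρ ^ 2 := by positivity
  have hs2 : s ^ 2 = k ^ 2 + 4 * ρ ^ 2 := Real.sq_sqrt hnn
  have hsk : k ≤ s := by
    rw [hs]
    nlinarith [Real.sq_sqrt hnn, Real.sqrt_nonneg (k ^ 2 + 4 * ρ ^ 2)]
  have hinner : Real.sqrt (k ^ 2 / (4 * ρ ^ 2) + 1) = s / (2 * ρ) := by
    have h4 : ((2:ℝ) * ρ) ^ 2 = 4 * ρ ^ 2 := by ring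
    have : k ^ 2 / (4 * ρ ^ 2) + 1 = (k ^ 2 + 4 * ρ ^ 2) / (2 * ρ) ^ 2 := by
      rw [h4, add_div, div_self (by positivity : (4:ℝ) * ρ ^ 2 ≠ 0)]
    rw [this, Real.sqrt_div' _ (by positivity), Real.sqrt_sq (by positivity)]
  rw [hinner, ge_iff_le,
    show (1 - (s / (2 * ρ) - k / (2 * ρ))) = (2 * ρ - s + k) / (2 * ρ) by
      field_simp; ring,
    ← mul_div_assoc, le_div_iff₀ (by positivity : (0:ℝ) < 2 * ρ)]
  -- reduce to: s*(k+4ρ) ≥ k² + 7kρ/2 + 11ρ²/2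
  have hpoly : (k ^ 2 + 7 / 2 * k * ρ + 11 / 2 * ρ ^ 2) ^ 2
      ≤ (k ^ 2 + 4 * ρ ^ 2) * (k + 4 * ρ) ^ 2 := by
    nlinarith [mul_nonneg (sub_nonneg.2 h2) (sq_nonneg (k - 7 / 2 * ρ)),
      mul_nonneg hρ.le (sq_nonneg (k - 2 * ρ - 39 / 46 * ρ)),
      mul_pos (mul_pos hρ hρ) (mul_pos hρ hρ), hρ.le, h2]
  have key : k ^ 2 + 7 / 2 * k * ρ + 11 / 2 * ρ ^ 2 ≤ s * (k + 4 * ρ) := by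
    have hR : 0 < k ^ 2 + 7 / 2 * k * ρ + 11 / 2 * ρ ^ 2 := by positivity
    have hX : 0 ≤ s * (k + 4 * ρ) := by
      apply mul_nonneg (Real.sqrt_nonneg _); nlinarith
    nlinarith [hpoly, hs2, hR, hX]
  nlinarith [key, hs2]
end
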